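/- arXiv:2105.11779 — 5 statements merged into one kernel-verified Lean document; each statement's English description precedes it below -/
import Mathlib

section
/- Every irrational p-adic number ξ satisfies 2 ≤ μ(ξ) ≤ μ×(ξ) ≤ 2·μ(ξ) (as extended real numbers, with the convention 2·∞ = ∞). -/
open Filter MeasureTheory
open scoped ENNReal

/-- A `p`-adic number is irrational if it is not the image of a rational number. -/
def PadicIrrational (p : ℕ) [Fact p.Prime] (ξ : ℚ_[p]) : Prop :=
  ∀ q : ℚ, (q : ℚ_[p]) ≠ ξ

/-- The irrationality exponent `μ(ξ)` of a `p`-adic number `ξ`: the supremum (in `[0,∞]`)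
of the real numbers `m` such that `0 < |yξ - x|_p ≤ max(|x|,|y|)^(-m)` has infinitely many
solutions in nonzero integers `x, y`. -/
noncomputable def muExp (p : ℕ) [Fact p.Prime] (ξ : ℚ_[p]) : ℝ≥0∞ :=
  sSup (ENNReal.ofReal '' {m : ℝ |
    {q : ℤ × ℤ | q.1 ≠ 0 ∧ q.2 ≠ 0 ∧
      0 < ‖(q.2 : ℚ_[p]) * ξ - (q.1 : ℚ_[p])‖ ∧
      ‖(q.2 : ℚ_[p]) * ξ - (q.1 : ℚ_[p])‖ ≤ (max |(q.1 : ℝ)| |(q.2 : ℝ)|) ^ (-m)}.Infinite})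

/-- The multiplicative irrationality exponent `μ×(ξ)`: the supremum of the real numbers `m`
such that `0 < |yξ - x|_p ≤ (|xy|^(1/2))^(-m)` has infinitely many solutions in nonzero
integers `x, y`. -/
noncomputable def muTimesExp (p : ℕ) [Fact p.Prime] (ξ : ℚ_[p]) : ℝ≥0∞ :=
  sSup (ENNReal.ofReal '' {m : ℝ |
    {q : ℤ × ℤ | q.1 ≠ 0 ∧ q.2 ≠ 0 ∧
      0 < ‖(q.2 : ℚ_[p]) * ξ - (q.1 : ℚ_[p])‖ ∧
      ‖(q.2 : ℚ_[p]) * ξ - (q.1 : ℚ_[p])‖ ≤ (Real.sqrt |(q.1 : ℝ) * (q.2 : ℝ)|) ^ (-m)}.Infinite})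

/-- The uniform irrationality exponent `μ̂(ξ)`: the supremum of the real numbers `m` such that
for every sufficiently large real `X` the system
`0 < max(|x|,|y|) ≤ X`, `|yξ - x|_p ≤ X^(-m)` has an integer solution. -/
noncomputable def muHatExp (p : ℕ) [Fact p.Prime] (ξ : ℚ_[p]) : ℝ≥0∞ :=
  sSup (ENNReal.ofReal '' {m : ℝ | ∀ᶠ X : ℝ in atTop, ∃ x y : ℤ,
    0 < max |(x : ℝ)| |(y : ℝ)| ∧ max |(x : ℝ)| |(y : ℝ)| ≤ X ∧
    ‖(y : ℚ_[p]) * ξ - (x : ℚ_[p])‖ ≤ X ^ (-m)})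

/-- The uniform multiplicative irrationality exponent `μ̂×(ξ)`: the supremum of the real
numbers `m` such that for every sufficiently large real `X` the system
`0 < |xy|^(1/2) ≤ X`, `|yξ - x|_p ≤ X^(-m)` has an integer solution. -/
noncomputable def muHatTimesExp (p : ℕ) [Fact p.Prime] (ξ : ℚ_[p]) : ℝ≥0∞ :=
  sSup (ENNReal.ofReal '' {m : ℝ | ∀ᶠ X : ℝ in atTop, ∃ x y : ℤ,
    0 < Real.sqrt |(x : ℝ) * (y : ℝ)| ∧ Real.sqrt |(x : ℝ) * (y : ℝ)| ≤ X ∧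
    ‖(y : ℚ_[p]) * ξ - (x : ℚ_[p])‖ ≤ X ^ (-m)})



lemma pigeon {p : ℕ} [hp : Fact p.Prime] (ξ : ℚ_[p]) (hξ : ‖ξ‖ ≤ 1) (j : ℕ) :
    ∃ x y : ℤ, |x| ≤ (p : ℤ) ^ j ∧ |y| ≤ (p : ℤ) ^ j ∧ ¬(x = 0 ∧ y = 0) ∧
      ‖(y : ℚ_[p]) * ξ - (x : ℚ_[p])‖ ≤ (p : ℝ) ^ (-(2 * j : ℕ) : ℤ) := by
  have hp1 : 1 < p := hp.out.one_lt
  set ζ : ℤ_[p] := ⟨ξ, hξ⟩ with hζ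
  set a : ℕ := ζ.appr (2 * j) with ha
  have hζa : ‖ξ - (a : ℚ_[p])‖ ≤ (p : ℝ) ^ (-(2 * j : ℕ) : ℤ) := by
    have h1 : ‖ζ - (a : ℤ_[p])‖ ≤ (p : ℝ) ^ (-(2 * j : ℕ) : ℤ) := by
      rw [PadicInt.norm_le_pow_iff_mem_span_pow]
      exact PadicInt.appr_spec (2 * j) ζ
    simpa [PadicInt.norm_def] using h1
  haveI : NeZero (p ^ (2 * j)) := ⟨pow_ne_zero _ hp.out.ne_zero⟩
  have hcard : Fintype.card (ZMod (p ^ (2 * j))) <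
      ((Finset.range (p ^ j + 1)) ×ˢ (Finset.range (p ^ j + 1))).card := by
    rw [ZMod.card, Finset.card_product, Finset.card_range]
    have : p ^ (2 * j) = p ^ j * p ^ j := by rw [two_mul, pow_add]
    rw [this]
    nlinarith [pow_pos (Nat.lt_of_lt_of_le Nat.zero_lt_one hp1.le) j]
  obtain ⟨q₁, hq₁, q₂, hq₂, hne, heq⟩ :=
    Finset.exists_ne_map_eq_of_card_lt_of_maps_to (t := (Finset.univ : Finset (ZMod (p ^ (2 * j)))))
      hcard (f := fun q : ℕ × ℕ => ((q.2 : ZMod (p ^ (2 * j))) * a - q.1))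
      (fun _ _ => Finset.mem_univ _)
  simp only [Finset.mem_product, Finset.mem_range] at hq₁ hq₂
  have hpj : ((p ^ j : ℕ) : ℤ) = (p : ℤ) ^ j := by push_cast; ring
  refine ⟨(q₁.1 : ℤ) - q₂.1, (q₁.2 : ℤ) - q₂.2, ?_, ?_, ?_, ?_⟩
  · have hx1 : q₁.1 ≤ p ^ j := by omega
    have hx2 : q₂.1 ≤ p ^ j := by omega
    rw [abs_le]; constructor <;> [skip; skip] <;>
      · push_cast; omega
  · have hx1 : q₁.2 ≤ p ^ j := by omega
    have hx2 : q₂.2 ≤ p ^ j := by omega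
    rw [abs_le]; constructor <;> [skip; skip] <;>
      · push_cast; omega
  · rintro ⟨h1, h2⟩
    apply hne
    have e1 : q₁.1 = q₂.1 := by omega
    have e2 : q₁.2 = q₂.2 := by omega
    exact Prod.ext e1 e2
  · set X : ℤ := (q₁.1 : ℤ) - q₂.1
    set Y : ℤ := (q₁.2 : ℤ) - q₂.2
    have hdvd : ((p : ℤ) ^ (2 * j)) ∣ Y * a - X := by
      have h0 : ((Y * (a : ℤ) - X : ℤ) : ZMod (p ^ (2 * j))) = 0 := by
        push_cast [X, Y]
        linear_combination heq
      have := (ZMod.intCast_zmod_eq_zero_iff_dvd _ _).mp h0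
      exact_mod_cast this
    have hB : ‖((Y * a - X : ℤ) : ℚ_[p])‖ ≤ (p : ℝ) ^ (-(2 * j : ℕ) : ℤ) := by
      rw [Padic.norm_int_le_pow_iff_dvd]
      exact_mod_cast hdvd
    have hA : ‖(Y : ℚ_[p]) * (ξ - (a : ℚ_[p]))‖ ≤ (p : ℝ) ^ (-(2 * j : ℕ) : ℤ) := by
      rw [norm_mul]
      calc ‖(Y : ℚ_[p])‖ * ‖ξ - (a : ℚ_[p])‖ ≤ 1 * ((p : ℝ) ^ (-(2 * j : ℕ) : ℤ)) := by
            apply mul_le_mul (Padic.norm_int_le_one _) hζa (norm_nonneg _) zero_le_one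
        _ = (p : ℝ) ^ (-(2 * j : ℕ) : ℤ) := one_mul _
    have hsplit : (Y : ℚ_[p]) * ξ - (X : ℚ_[p]) =
        (Y : ℚ_[p]) * (ξ - (a : ℚ_[p])) + ((Y * a - X : ℤ) : ℚ_[p]) := by
      push_cast; ring
    rw [hsplit]
    exact le_trans (Padic.nonarchimedean _ _) (max_le hA hB)

section Aux
variable {p : ℕ} [hp : Fact p.Prime]

lemma irr_scale (ξ : ℚ_[p]) (hξ : PadicIrrational p ξ) (v : ℕ) :
    PadicIrrational p ((p : ℚ_[p]) ^ v * ξ) := by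
  intro q hq
  have hpv : ((p : ℚ_[p]) ^ v) ≠ 0 := pow_ne_zero _ (Nat.cast_ne_zero.mpr hp.out.ne_zero)
  apply hξ (q / (p : ℚ) ^ v)
  push_cast
  field_simp at hq ⊢
  linear_combination hq

lemma lin_ne_zero (ξ : ℚ_[p]) (hξ : PadicIrrational p ξ) (x y : ℤ) (hy : y ≠ 0) :
    (y : ℚ_[p]) * ξ - (x : ℚ_[p]) ≠ 0 := by
  intro h
  have hy' : (y : ℚ_[p]) ≠ 0 := Int.cast_ne_zero.mpr hy
  apply hξ ((x : ℚ) / (y : ℚ))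
  have hyq : ((y : ℚ) : ℚ_[p]) ≠ 0 := by push_cast; exact hy'
  push_cast
  rw [div_eq_iff (by push_cast; exact hy')]
  push_cast
  linear_combination -h

end Aux

lemma infinite_aux {α : Type*} (S : Set α) (F : α → ℝ) (hpos : ∀ q ∈ S, 0 < F q)
    (h : ∀ ε > 0, ∃ q ∈ S, F q < ε) : S.Infinite := by
  intro hfin
  obtain ⟨q₀, hq₀, _⟩ := h 1 one_pos
  set t := hfin.toFinset.image F with ht'
  have ht : t.Nonempty := ⟨F q₀, Finset.mem_image_of_mem _ (hfin.mem_toFinset.mpr hq₀)⟩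
  obtain ⟨q₁, hq₁, hFq₁⟩ := Finset.mem_image.mp (t.min'_mem ht)
  have hminpos : 0 < t.min' ht := hFq₁ ▸ hpos q₁ (hfin.mem_toFinset.mp hq₁)
  obtain ⟨q, hq, hlt⟩ := h _ hminpos
  exact absurd (Finset.min'_le t _ (Finset.mem_image_of_mem F (hfin.mem_toFinset.mpr hq)))
    (not_le.mpr hlt)

lemma key {p : ℕ} [hp : Fact p.Prime] (ξ : ℚ_[p]) (hξ : PadicIrrational p ξ) (m : ℝ)
    (hm0 : 0 ≤ m) (hm2 : m < 2) (ε : ℝ) (hε : 0 < ε) :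
    ∃ q : ℤ × ℤ, q.1 ≠ 0 ∧ q.2 ≠ 0 ∧
      0 < ‖(q.2 : ℚ_[p]) * ξ - (q.1 : ℚ_[p])‖ ∧
      ‖(q.2 : ℚ_[p]) * ξ - (q.1 : ℚ_[p])‖ ≤ (max |(q.1 : ℝ)| |(q.2 : ℝ)|) ^ (-m) ∧
      ‖(q.2 : ℚ_[p]) * ξ - (q.1 : ℚ_[p])‖ < ε := by
  have hp1 : (1 : ℝ) < p := by exact_mod_cast hp.out.one_lt
  have hp0 : (0 : ℝ) < p := lt_trans one_pos hp1
  have hpZ : (1 : ℤ) < p := by exact_mod_cast hp.out.one_lt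
  -- choose v with ‖ξ‖ ≤ p^v
  obtain ⟨v, hv⟩ := pow_unbounded_of_one_lt ‖ξ‖ hp1
  set ξ' : ℚ_[p] := (p : ℚ_[p]) ^ v * ξ with hξ'def
  have hξ'norm : ‖ξ'‖ ≤ 1 := by
    rw [hξ'def, norm_mul, Padic.norm_p_pow, zpow_neg, zpow_natCast]
    calc ((p : ℝ) ^ v)⁻¹ * ‖ξ‖ ≤ ((p : ℝ) ^ v)⁻¹ * (p : ℝ) ^ v := by
          apply mul_le_mul_of_nonneg_left hv.le (inv_nonneg.mpr (pow_nonneg hp0.le v))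
      _ = 1 := inv_mul_cancel₀ (ne_of_gt (pow_pos hp0 v))
  have hξ'irr : PadicIrrational p ξ' := irr_scale ξ hξ v
  have hξ'ne : ξ' ≠ 0 := by
    intro h
    exact hξ'irr 0 (by simpa using h.symm)
  have hξ'pos : 0 < ‖ξ'‖ := norm_pos_iff.mpr hξ'ne
  -- choose w with p^(-w) ≤ ‖ξ'‖
  obtain ⟨w, hw⟩ := pow_unbounded_of_one_lt ‖ξ'‖⁻¹ hp1
  have hwle : (p : ℝ) ^ (-(w : ℤ)) ≤ ‖ξ'‖ := by
    rw [zpow_neg, zpow_natCast]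
    rw [inv_le_comm₀ (pow_pos hp0 w) hξ'pos]
    exact hw.le
  -- choose j
  obtain ⟨j₁, hj₁⟩ := exists_nat_ge (m * v / (2 - m))
  obtain ⟨j₂, hj₂⟩ := pow_unbounded_of_one_lt ε⁻¹ hp1
  set j : ℕ := max (max j₁ j₂) (w + 1) with hjdef
  have hjw : w + 1 ≤ j := le_max_right _ _
  have hj1 : 1 ≤ j := le_trans (Nat.le_add_left 1 w) hjw
  have hC2 : m * (v + j) ≤ 2 * j := by
    have h1 : m * v / (2 - m) ≤ (j : ℝ) := le_trans hj₁ (by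
      exact_mod_cast le_trans (le_max_left j₁ j₂) (le_max_left _ _))
    rw [div_le_iff₀ (by linarith : (0:ℝ) < 2 - m)] at h1
    nlinarith
  have hC3 : (p : ℝ) ^ (-(2 * j : ℕ) : ℤ) < ε := by
    have h1 : ε⁻¹ < (p : ℝ) ^ (2 * j) := by
      calc ε⁻¹ < (p : ℝ) ^ j₂ := hj₂
        _ ≤ (p : ℝ) ^ (2 * j) := by
            apply pow_le_pow_right₀ hp1.le
            calc j₂ ≤ j := le_trans (le_max_right j₁ j₂) (le_max_left _ _)
              _ ≤ 2 * j := by omega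
    rw [zpow_neg, zpow_natCast]
    rw [inv_lt_comm₀ (pow_pos hp0 _) hε]
    exact h1
  -- apply pigeonhole to ξ'
  obtain ⟨x, y, hxb, hyb, hxy0, hnorm⟩ := pigeon ξ' hξ'norm j
  have hy0 : y ≠ 0 := by
    intro hy
    have hx0 : x ≠ 0 := fun hx => hxy0 ⟨hx, hy⟩
    rw [hy] at hnorm
    simp only [Int.cast_zero, zero_mul, zero_sub, norm_neg] at hnorm
    have hdvd : ((p : ℤ) ^ (2 * j)) ∣ x := by
      have := (Padic.norm_int_le_pow_iff_dvd x (2 * j)).mp hnorm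
      exact_mod_cast this
    have hle := Int.le_of_dvd (abs_pos.mpr hx0) ((dvd_abs _ _).mpr hdvd)
    have hlt : (p : ℤ) ^ j < (p : ℤ) ^ (2 * j) := pow_lt_pow_right₀ hpZ (by omega)
    omega
  have hx0 : x ≠ 0 := by
    intro hx
    rw [hx] at hnorm
    simp only [Int.cast_zero, sub_zero, norm_mul] at hnorm
    have hy' : ‖(y : ℚ_[p])‖ ≤ (p : ℝ) ^ (-(2 * j : ℕ) : ℤ) / (p : ℝ) ^ (-(w : ℤ)) := by
      rw [le_div_iff₀ (zpow_pos hp0 _)]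
      calc ‖(y : ℚ_[p])‖ * (p : ℝ) ^ (-(w : ℤ)) ≤ ‖(y : ℚ_[p])‖ * ‖ξ'‖ := by
            apply mul_le_mul_of_nonneg_left hwle (norm_nonneg _)
        _ ≤ (p : ℝ) ^ (-(2 * j : ℕ) : ℤ) := hnorm
    rw [← zpow_sub₀ (ne_of_gt hp0)] at hy'
    have hy'' : ‖(y : ℚ_[p])‖ ≤ (p : ℝ) ^ (-((j + 1 : ℕ) : ℤ)) := by
      refine le_trans hy' (zpow_le_zpow_right₀ hp1.le ?_)
      push_cast
      omega
    have hdvd : ((p : ℤ) ^ (j + 1)) ∣ y := by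
      have := (Padic.norm_int_le_pow_iff_dvd y (j + 1)).mp hy''
      exact_mod_cast this
    have hle := Int.le_of_dvd (abs_pos.mpr hy0) ((dvd_abs _ _).mpr hdvd)
    have hlt : (p : ℤ) ^ j < (p : ℤ) ^ (j + 1) := pow_lt_pow_right₀ hpZ (by omega)
    omega
  -- final pair
  refine ⟨(x, (p : ℤ) ^ v * y), hx0, mul_ne_zero (pow_ne_zero _ (by omega)) hy0, ?_, ?_, ?_⟩
  all_goals
    have hcast : (((p : ℤ) ^ v * y : ℤ) : ℚ_[p]) * ξ - (x : ℚ_[p])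
        = (y : ℚ_[p]) * ξ' - (x : ℚ_[p]) := by
      rw [hξ'def]; push_cast; ring
  · simp only [hcast]
    exact norm_pos_iff.mpr (lin_ne_zero ξ' hξ'irr x y hy0)
  · simp only [hcast]
    set M : ℝ := max |(x : ℝ)| |(((p : ℤ) ^ v * y : ℤ) : ℝ)| with hMdef
    have hM1 : (1 : ℝ) ≤ M := by
      refine le_trans ?_ (le_max_left _ _)
      exact_mod_cast Int.one_le_abs hx0
    have hMle : M ≤ (p : ℝ) ^ (v + j) := by
      have hxr : |(x : ℝ)| ≤ (p : ℝ) ^ j := by exact_mod_cast hxb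
      have hyr : |(y : ℝ)| ≤ (p : ℝ) ^ j := by exact_mod_cast hyb
      apply max_le
      · calc |(x : ℝ)| ≤ (p : ℝ) ^ j := hxr
          _ ≤ (p : ℝ) ^ (v + j) := pow_le_pow_right₀ hp1.le (by omega)
      · have : |(((p : ℤ) ^ v * y : ℤ) : ℝ)| = (p : ℝ) ^ v * |(y : ℝ)| := by
          push_cast
          rw [abs_mul, abs_pow, abs_of_nonneg hp0.le]
        rw [this, pow_add]
        exact mul_le_mul_of_nonneg_left hyr (pow_nonneg hp0.le v)
    calc ‖(y : ℚ_[p]) * ξ' - (x : ℚ_[p])‖ ≤ (p : ℝ) ^ (-(2 * j : ℕ) : ℤ) := hnorm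
      _ ≤ ((p : ℝ) ^ (v + j)) ^ (-m) := by
          rw [← Real.rpow_natCast (p : ℝ) (v + j), ← Real.rpow_mul hp0.le,
            ← Real.rpow_intCast (p : ℝ) (-(2 * j : ℕ) : ℤ)]
          rw [Real.rpow_le_rpow_left_iff hp1]
          push_cast
          nlinarith
      _ ≤ M ^ (-m) := Real.rpow_le_rpow_of_nonpos (lt_of_lt_of_le one_pos hM1) hMle
          (neg_nonpos.mpr hm0)
  · simp only [hcast]
    exact lt_of_le_of_lt hnorm hC3

lemma main_infinite {p : ℕ} [hp : Fact p.Prime] (ξ : ℚ_[p]) (hξ : PadicIrrational p ξ) (m : ℝ)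
    (hm0 : 0 ≤ m) (hm2 : m < 2) :
    {q : ℤ × ℤ | q.1 ≠ 0 ∧ q.2 ≠ 0 ∧
      0 < ‖(q.2 : ℚ_[p]) * ξ - (q.1 : ℚ_[p])‖ ∧
      ‖(q.2 : ℚ_[p]) * ξ - (q.1 : ℚ_[p])‖ ≤ (max |(q.1 : ℝ)| |(q.2 : ℝ)|) ^ (-m)}.Infinite := by
  apply infinite_aux _ (fun q : ℤ × ℤ => ‖(q.2 : ℚ_[p]) * ξ - (q.1 : ℚ_[p])‖)
  · exact fun q hq => hq.2.2.1
  · intro ε hε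
    obtain ⟨q, h1, h2, h3, h4, h5⟩ := key ξ hξ m hm0 hm2 ε hε
    exact ⟨q, ⟨h1, h2, h3, h4⟩, h5⟩


/-- Every irrational `p`-adic number `ξ` satisfies `2 ≤ μ(ξ) ≤ μ×(ξ) ≤ 2·μ(ξ)`
(as extended reals, with `2·∞ = ∞`). -/
theorem statement0 (p : ℕ) [Fact p.Prime] (ξ : ℚ_[p]) (hξ : PadicIrrational p ξ) :
    2 ≤ muExp p ξ ∧ muExp p ξ ≤ muTimesExp p ξ ∧ muTimesExp p ξ ≤ 2 * muExp p ξ := by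
  refine ⟨?_, ?_, ?_⟩
  · -- 2 ≤ μ
    refine le_of_forall_lt fun c hc => ?_
    have hct : c ≠ ⊤ := ne_top_of_lt hc
    set m : ℝ := c.toReal with hmdef
    have hm2 : m < 2 := by
      have := (ENNReal.toReal_lt_toReal hct (by norm_num : (2:ℝ≥0∞) ≠ ⊤)).mpr hc
      simpa using this
    have hm0 : 0 ≤ m := ENNReal.toReal_nonneg
    set m' : ℝ := (m + 2) / 2 with hm'def
    have hm'0 : 0 ≤ m' := by rw [hm'def]; linarith
    have hm'2 : m' < 2 := by rw [hm'def]; linarith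
    have hmm' : m < m' := by rw [hm'def]; linarith
    calc c = ENNReal.ofReal m := (ENNReal.ofReal_toReal hct).symm
      _ < ENNReal.ofReal m' := by
          rw [ENNReal.ofReal_lt_ofReal_iff (by linarith)]; exact hmm'
      _ ≤ muExp p ξ := le_sSup ⟨m', main_infinite ξ hξ m' hm'0 hm'2, rfl⟩
  · -- μ ≤ μ×
    apply sSup_le
    rintro a ⟨m, hm, rfl⟩
    rcases le_or_gt m 0 with h | h
    · rw [ENNReal.ofReal_eq_zero.mpr h]; exact zero_le
    · apply le_sSup
      refine ⟨m, hm.mono fun q hq => ?_, rfl⟩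
      obtain ⟨h1, h2, h3, h4⟩ := hq
      refine ⟨h1, h2, h3, le_trans h4 ?_⟩
      have hx1 : (1 : ℝ) ≤ |(q.1 : ℝ)| := by exact_mod_cast Int.one_le_abs h1
      have hy1 : (1 : ℝ) ≤ |(q.2 : ℝ)| := by exact_mod_cast Int.one_le_abs h2
      have hmax1 : (1 : ℝ) ≤ max |(q.1 : ℝ)| |(q.2 : ℝ)| := le_trans hx1 (le_max_left _ _)
      have hs : Real.sqrt |(q.1 : ℝ) * (q.2 : ℝ)| ≤ max |(q.1 : ℝ)| |(q.2 : ℝ)| := by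
        rw [abs_mul]
        calc Real.sqrt (|(q.1 : ℝ)| * |(q.2 : ℝ)|)
            ≤ Real.sqrt (max |(q.1 : ℝ)| |(q.2 : ℝ)| * max |(q.1 : ℝ)| |(q.2 : ℝ)|) := by
              apply Real.sqrt_le_sqrt
              apply mul_le_mul (le_max_left _ _) (le_max_right _ _) (by linarith) (by linarith)
          _ = max |(q.1 : ℝ)| |(q.2 : ℝ)| := Real.sqrt_mul_self (by linarith)
      have hspos : 0 < Real.sqrt |(q.1 : ℝ) * (q.2 : ℝ)| := by
        apply Real.sqrt_pos.mpr
        rw [abs_mul]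
        nlinarith
      exact Real.rpow_le_rpow_of_nonpos hspos hs (neg_nonpos.mpr h.le)
  · -- μ× ≤ 2μ
    apply sSup_le
    rintro a ⟨m, hm, rfl⟩
    rcases le_or_gt m 0 with h | h
    · rw [ENNReal.ofReal_eq_zero.mpr h]; exact zero_le
    · have h2' : ENNReal.ofReal (m / 2) ≤ muExp p ξ := by
        apply le_sSup
        refine ⟨m / 2, hm.mono fun q hq => ?_, rfl⟩
        obtain ⟨h1, h2, h3, h4⟩ := hq
        refine ⟨h1, h2, h3, le_trans h4 ?_⟩
        have hx1 : (1 : ℝ) ≤ |(q.1 : ℝ)| := by exact_mod_cast Int.one_le_abs h1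
        have hy1 : (1 : ℝ) ≤ |(q.2 : ℝ)| := by exact_mod_cast Int.one_le_abs h2
        have hmax1 : (1 : ℝ) ≤ max |(q.1 : ℝ)| |(q.2 : ℝ)| := le_trans hx1 (le_max_left _ _)
        set t : ℝ := |(q.1 : ℝ) * (q.2 : ℝ)| with htdef
        have ht0 : 0 ≤ t := abs_nonneg _
        have hmt : max |(q.1 : ℝ)| |(q.2 : ℝ)| ≤ t := by
          rw [htdef, abs_mul]
          apply max_le
          · nlinarith
          · nlinarith
        have heq : Real.sqrt t ^ (-m) = t ^ (-(m / 2)) := by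
          rw [Real.sqrt_eq_rpow, ← Real.rpow_mul ht0]
          ring_nf
        rw [heq]
        exact Real.rpow_le_rpow_of_nonpos (lt_of_lt_of_le one_pos hmax1) hmt
          (neg_nonpos.mpr (by linarith))
      calc ENNReal.ofReal m = ENNReal.ofReal (2 * (m / 2)) := by rw [mul_div_cancel₀]; norm_num
        _ = ENNReal.ofReal 2 * ENNReal.ofReal (m / 2) := ENNReal.ofReal_mul (by norm_num)
        _ = 2 * ENNReal.ofReal (m / 2) := by norm_num
        _ ≤ 2 * muExp p ξ := mul_le_mul_right h2' 2
end

section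
/- Every irrational p-adic number ξ satisfies μ̂(ξ) = 2, and consequently 2 ≤ μ̂×(ξ) ≤ 4. -/
open Filter MeasureTheory
open scoped ENNReal

section PadicAuxSec
variable {p : ℕ} [hp : Fact p.Prime]

lemma one_lt_p_real : (1:ℝ) < p := by exact_mod_cast hp.1.one_lt

lemma one_le_abs_mul_norm {z : ℤ} (hz : z ≠ 0) :
    1 ≤ |(z:ℝ)| * ‖(z:ℚ_[p])‖ := by
  have hz' : ((z:ℚ_[p])) ≠ 0 := Int.cast_ne_zero.mpr hz
  have hnorm : ‖(z:ℚ_[p])‖ = (p:ℝ) ^ (-(z:ℚ_[p]).valuation) := Padic.norm_eq_zpow_neg_valuation hz'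
  set v := (z:ℚ_[p]).valuation with hv
  have hv0 : 0 ≤ v := by
    by_contra h
    push_neg at h
    have h1 : ‖(z:ℚ_[p])‖ ≤ 1 := Padic.norm_int_le_one z
    rw [hnorm] at h1
    have h2 : (1:ℝ) < (p:ℝ) ^ (-v) := by
      apply one_lt_zpow₀ one_lt_p_real (by omega)
    linarith
  have htn : ((v.toNat : ℤ)) = v := Int.toNat_of_nonneg hv0
  have hdvd : ((p:ℤ) ^ v.toNat) ∣ z := by
    rw [← Padic.norm_int_le_pow_iff_dvd, hnorm]
    apply le_of_eq
    congr 1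
    omega
  have hle : ((p:ℝ)) ^ v.toNat ≤ |(z:ℝ)| := by
    have h3 : ((p:ℤ) ^ v.toNat) ≤ |z| := Int.le_of_dvd (abs_pos.mpr hz) ((dvd_abs _ _).mpr hdvd)
    exact_mod_cast h3
  have hppos : (0:ℝ) < (p:ℝ) := lt_trans zero_lt_one one_lt_p_real
  calc (1:ℝ) = (p:ℝ) ^ v.toNat * (p:ℝ) ^ (-v) := by
        rw [← zpow_natCast, ← zpow_add₀ hppos.ne']
        rw [htn]; simp
    _ ≤ |(z:ℝ)| * ‖(z:ℚ_[p])‖ := by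
        rw [hnorm]
        exact mul_le_mul_of_nonneg_right hle (by positivity)

lemma err_pos {ξ : ℚ_[p]} (hξ : PadicIrrational p ξ) {x y : ℤ} (h : ¬(x = 0 ∧ y = 0)) :
    0 < ‖(y:ℚ_[p]) * ξ - (x:ℚ_[p])‖ := by
  rw [norm_pos_iff]
  intro h0
  have h1 : (y:ℚ_[p]) * ξ = x := by linear_combination h0
  by_cases hy : y = 0
  · subst hy
    simp only [Int.cast_zero, zero_mul] at h1
    exact h ⟨by exact_mod_cast h1.symm, rfl⟩
  · have hy' : ((y:ℚ_[p])) ≠ 0 := Int.cast_ne_zero.mpr hy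
    apply hξ ((x:ℚ)/(y:ℚ))
    push_cast
    field_simp
    linear_combination -h1

lemma dirichlet_core (ξ : ℚ_[p]) (hξ : ‖ξ‖ ≤ 1) (N k : ℕ) (h : p ^ k < (N+1)^2) :
    ∃ x y : ℤ, ¬(x = 0 ∧ y = 0) ∧ |x| ≤ (N:ℤ) ∧ |y| ≤ (N:ℤ) ∧
      ‖(y:ℚ_[p]) * ξ - (x:ℚ_[p])‖ ≤ ((p:ℝ) ^ k)⁻¹ := by
  set ζ : ℤ_[p] := ⟨ξ, hξ⟩ with hζ
  haveI : NeZero (p ^ k) := ⟨pow_ne_zero _ hp.1.pos.ne'⟩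
  set f : Fin (N+1) × Fin (N+1) → ZMod (p^k) :=
    fun q => PadicInt.toZModPow k ((q.2.val : ℤ_[p]) * ζ - (q.1.val : ℤ_[p])) with hf
  have hcard : Fintype.card (ZMod (p^k)) < Fintype.card (Fin (N+1) × Fin (N+1)) := by
    rw [ZMod.card, Fintype.card_prod, Fintype.card_fin]
    calc p ^ k < (N+1)^2 := h
      _ = (N+1) * (N+1) := sq (N+1)
  obtain ⟨a, b, hne, heq⟩ := Fintype.exists_ne_map_eq_of_card_lt f hcard
  refine ⟨(a.1.val : ℤ) - (b.1.val : ℤ), (a.2.val : ℤ) - (b.2.val : ℤ), ?_, ?_, ?_, ?_⟩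
  · rintro ⟨h1, h2⟩
    apply hne
    have e1 : a.1 = b.1 := Fin.ext (by omega)
    have e2 : a.2 = b.2 := Fin.ext (by omega)
    exact Prod.ext e1 e2
  · have := a.1.isLt; have := b.1.isLt
    rw [abs_le]; omega
  · have := a.2.isLt; have := b.2.isLt
    rw [abs_le]; omega
  · set w : ℤ_[p] := ((a.2.val : ℤ_[p]) * ζ - (a.1.val : ℤ_[p])) -
      ((b.2.val : ℤ_[p]) * ζ - (b.1.val : ℤ_[p])) with hw
    have hker : PadicInt.toZModPow k w = 0 := by
      rw [hw, map_sub, sub_eq_zero]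
      exact heq
    have hnw : ‖w‖ ≤ (p:ℝ) ^ (-(k:ℤ)) := by
      rw [PadicInt.norm_le_pow_iff_mem_span_pow, ← PadicInt.ker_toZModPow, RingHom.mem_ker]
      exact hker
    have hcoe : ((w : ℚ_[p])) =
        (((a.2.val : ℤ) - (b.2.val : ℤ) : ℤ) : ℚ_[p]) * ξ -
        (((a.1.val : ℤ) - (b.1.val : ℤ) : ℤ) : ℚ_[p]) := by
      have hzc : ((ζ : ℚ_[p])) = ξ := rfl
      rw [hw]
      push_cast [hzc]
      ring
    rw [← hcoe, PadicInt.padic_norm_e_of_padicInt]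
    calc ‖w‖ ≤ (p:ℝ) ^ (-(k:ℤ)) := hnw
      _ = ((p:ℝ) ^ k)⁻¹ := by rw [zpow_neg, zpow_natCast]

lemma dirichlet_ev (ξ : ℚ_[p]) (hξn : ‖ξ‖ ≤ 1) {m : ℝ} (hm1 : 0 < m) (hm2 : m < 2) :
    ∀ᶠ X : ℝ in atTop, ∃ x y : ℤ, ¬(x = 0 ∧ y = 0) ∧ |(x:ℝ)| ≤ X ∧ |(y:ℝ)| ≤ X ∧
      ‖(y : ℚ_[p]) * ξ - (x : ℚ_[p])‖ ≤ X ^ (-m) := by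
  have hp1 : (1:ℝ) < p := one_lt_p_real
  have hev : ∀ᶠ X : ℝ in atTop, (p:ℝ) ≤ X ^ (2 - m) :=
    (tendsto_rpow_atTop (by linarith)).eventually_ge_atTop (p:ℝ)
  filter_upwards [hev, eventually_ge_atTop (1:ℝ)] with X hX2 hX1
  set N := ⌊X⌋₊ with hN
  set k := ⌈Real.logb p (X ^ m)⌉₊ with hk
  have hX0 : (0:ℝ) < X := lt_of_lt_of_le zero_lt_one hX1
  have hXm1 : (1:ℝ) ≤ X ^ m := Real.one_le_rpow hX1 hm1.le
  have hXm0 : (0:ℝ) < X ^ m := lt_of_lt_of_le zero_lt_one hXm1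
  have hlogb0 : 0 ≤ Real.logb p (X ^ m) := Real.logb_nonneg hp1 hXm1
  have hk1 : X ^ m ≤ (p:ℝ) ^ k := by
    have h1 : Real.logb p (X ^ m) ≤ (k : ℝ) := Nat.le_ceil _
    calc X ^ m = (p:ℝ) ^ Real.logb p (X ^ m) :=
          (Real.rpow_logb (by linarith) (by linarith) hXm0).symm
      _ ≤ (p:ℝ) ^ (k:ℝ) := Real.rpow_le_rpow_of_exponent_le hp1.le h1
      _ = (p:ℝ) ^ k := Real.rpow_natCast _ _
  have hk2 : ((p:ℝ) ^ k) ≤ (p:ℝ) * X ^ m := by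
    have h2 : (k : ℝ) ≤ Real.logb p (X ^ m) + 1 := by
      have := Nat.ceil_lt_add_one hlogb0
      linarith
    calc ((p:ℝ) ^ k) = (p:ℝ) ^ (k:ℝ) := (Real.rpow_natCast _ _).symm
      _ ≤ (p:ℝ) ^ (Real.logb p (X ^ m) + 1) := Real.rpow_le_rpow_of_exponent_le hp1.le h2
      _ = (p:ℝ) ^ Real.logb p (X ^ m) * (p:ℝ) ^ (1:ℝ) := Real.rpow_add (by linarith) _ _
      _ = (p:ℝ) * X ^ m := by
          rw [Real.rpow_logb (by linarith) (by linarith) hXm0, Real.rpow_one]; ring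
  have hcard : p ^ k < (N + 1) ^ 2 := by
    have hXN : X < (N:ℝ) + 1 := Nat.lt_floor_add_one X
    have h3 : (p:ℝ) ^ k < ((N:ℝ) + 1) ^ 2 := by
      calc (p:ℝ)^k ≤ (p:ℝ) * X ^ m := hk2
        _ ≤ X ^ (2 - m) * X ^ m := mul_le_mul_of_nonneg_right hX2 hXm0.le
        _ = X ^ (2:ℝ) := by rw [← Real.rpow_add hX0]; norm_num
        _ = X ^ (2:ℕ) := by rw [← Real.rpow_natCast X 2]; norm_num
        _ < ((N:ℝ) + 1) ^ 2 := by
            apply pow_lt_pow_left₀ hXN hX0.le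
            norm_num
    exact_mod_cast h3
  obtain ⟨x, y, hxy, hxb, hyb, hnorm⟩ := dirichlet_core ξ hξn N k hcard
  have hNX : (N:ℝ) ≤ X := Nat.floor_le hX0.le
  refine ⟨x, y, hxy, ?_, ?_, ?_⟩
  · calc |(x:ℝ)| = ((|x| : ℤ) : ℝ) := by push_cast; rfl
      _ ≤ ((N:ℤ):ℝ) := by exact_mod_cast hxb
      _ ≤ X := by exact_mod_cast hNX
  · calc |(y:ℝ)| = ((|y| : ℤ) : ℝ) := by push_cast; rfl
      _ ≤ ((N:ℤ):ℝ) := by exact_mod_cast hyb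
      _ ≤ X := by exact_mod_cast hNX
  · calc ‖(y:ℚ_[p]) * ξ - (x:ℚ_[p])‖ ≤ ((p:ℝ) ^ k)⁻¹ := hnorm
      _ ≤ (X ^ m)⁻¹ := by
          apply inv_anti₀ hXm0 hk1
      _ = X ^ (-m) := (Real.rpow_neg hX0.le m).symm

lemma lower (ξ : ℚ_[p]) (hirr : PadicIrrational p ξ) {m : ℝ} (hm1 : 1 < m) (hm2 : m < 2) :
    ∀ᶠ X : ℝ in atTop, ∃ x y : ℤ, x ≠ 0 ∧ y ≠ 0 ∧ |(x:ℝ)| ≤ X ∧ |(y:ℝ)| ≤ X ∧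
      ‖(y : ℚ_[p]) * ξ - (x : ℚ_[p])‖ ≤ X ^ (-m) := by
  have hξ0 : ξ ≠ 0 := fun h => hirr 0 (by simp [h])
  have hnξ : 0 < ‖ξ‖ := norm_pos_iff.mpr hξ0
  set m' : ℝ := (m + 2) / 2 with hm'
  have hmm' : m < m' := by rw [hm']; linarith
  have hm'2 : m' < 2 := by rw [hm']; linarith
  have hm'0 : (0:ℝ) < m' := by rw [hm']; linarith
  have base : ∀ᶠ X : ℝ in atTop, ∃ x y : ℤ, ¬(x = 0 ∧ y = 0) ∧ |(x:ℝ)| ≤ X ∧ |(y:ℝ)| ≤ X ∧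
      ‖(y : ℚ_[p]) * ξ - (x : ℚ_[p])‖ ≤ X ^ (-m) := by
    have hgrow : ∀ᶠ X : ℝ in atTop, max 1 ‖ξ‖ ≤ X ^ (m' - m) :=
      (tendsto_rpow_atTop (by linarith)).eventually_ge_atTop _
    rcases le_or_gt ‖ξ‖ 1 with hle | hgt
    · filter_upwards [dirichlet_ev ξ hle hm'0 hm'2, eventually_ge_atTop (1:ℝ)]
        with X hsol hX1
      obtain ⟨x, y, h0, hx, hy, herr⟩ := hsol
      exact ⟨x, y, h0, hx, hy, herr.trans
        (Real.rpow_le_rpow_of_exponent_le hX1 (by linarith))⟩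
    · have hinv : ‖ξ⁻¹‖ ≤ 1 := by
        rw [norm_inv]
        exact inv_le_one_of_one_le₀ hgt.le
      filter_upwards [dirichlet_ev ξ⁻¹ hinv hm'0 hm'2, hgrow, eventually_ge_atTop (1:ℝ)]
        with X hsol hg hX1
      obtain ⟨a, b, h0, ha, hb, herr⟩ := hsol
      have hX0 : (0:ℝ) < X := by linarith
      refine ⟨b, a, fun hh => h0 ⟨hh.2, hh.1⟩, hb, ha, ?_⟩
      have hkey : (a:ℚ_[p]) * ξ - (b:ℚ_[p]) = -(ξ * ((b:ℚ_[p]) * ξ⁻¹ - (a:ℚ_[p]))) := by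
        field_simp; ring
      rw [hkey, norm_neg, norm_mul]
      calc ‖ξ‖ * ‖(b:ℚ_[p]) * ξ⁻¹ - (a:ℚ_[p])‖ ≤ X ^ (m' - m) * X ^ (-m') := by
            apply mul_le_mul (le_trans (le_max_right _ _) hg) herr (norm_nonneg _)
            positivity
        _ = X ^ (-m) := by
            rw [← Real.rpow_add hX0]; ring_nf
  have hsmall : ∀ᶠ X : ℝ in atTop, X ^ (1 - m) < ‖ξ‖ := by
    have h1 : Tendsto (fun X : ℝ => X ^ (-(m - 1))) atTop (nhds 0) :=
      tendsto_rpow_neg_atTop (by linarith)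
    have h2 : (fun X : ℝ => X ^ (-(m-1))) = fun X : ℝ => X ^ (1 - m) := by
      funext X; ring_nf
    rw [h2] at h1
    exact h1.eventually_lt_const hnξ
  filter_upwards [base, hsmall, eventually_gt_atTop (1:ℝ)] with X hsol hsm hX1
  obtain ⟨x, y, h0, hx, hy, herr⟩ := hsol
  have hX0 : (0:ℝ) < X := by linarith
  have hXm : X * X ^ (-m) = X ^ (1 - m) := by
    rw [show (1 - m) = 1 + (-m) by ring, Real.rpow_add hX0, Real.rpow_one]
  have hsm1 : X ^ (1 - m) < 1 := Real.rpow_lt_one_of_one_lt_of_neg hX1 (by linarith)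
  have hy0 : y ≠ 0 := by
    intro hy0
    subst hy0
    have hx0 : x ≠ 0 := fun hh => h0 ⟨hh, rfl⟩
    have herr' : ‖(x:ℚ_[p])‖ ≤ X ^ (-m) := by
      simpa using herr
    have h1 : (1:ℝ) ≤ |(x:ℝ)| * ‖(x:ℚ_[p])‖ := one_le_abs_mul_norm hx0
    have h2 : |(x:ℝ)| * ‖(x:ℚ_[p])‖ ≤ X * X ^ (-m) :=
      mul_le_mul hx herr' (norm_nonneg _) hX0.le
    rw [hXm] at h2
    linarith
  have hx0 : x ≠ 0 := by
    intro hx0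
    subst hx0
    have herr' : ‖(y:ℚ_[p])‖ * ‖ξ‖ ≤ X ^ (-m) := by
      rw [← norm_mul]
      simpa using herr
    have h1 : (1:ℝ) ≤ |(y:ℝ)| * ‖(y:ℚ_[p])‖ := one_le_abs_mul_norm hy0
    have h2 : ‖ξ‖ ≤ X ^ (1 - m) := by
      calc ‖ξ‖ = 1 * ‖ξ‖ := (one_mul _).symm
        _ ≤ (|(y:ℝ)| * ‖(y:ℚ_[p])‖) * ‖ξ‖ := mul_le_mul_of_nonneg_right h1 (norm_nonneg _)
        _ = |(y:ℝ)| * (‖(y:ℚ_[p])‖ * ‖ξ‖) := by ring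
        _ ≤ |(y:ℝ)| * X ^ (-m) := mul_le_mul_of_nonneg_left herr' (abs_nonneg _)
        _ ≤ X * X ^ (-m) := mul_le_mul_of_nonneg_right hy (by positivity)
        _ = X ^ (1 - m) := hXm
    linarith
  exact ⟨x, y, hx0, hy0, hx, hy, herr⟩

lemma mul_max_le (t a b : ℝ) (ht : 0 ≤ t) : t * max a b ≤ max (t*a) (t*b) := by
  rcases le_total a b with h | h
  · rw [max_eq_right h]
    exact le_max_of_le_right (mul_le_mul_of_nonneg_left le_rfl ht)
  · rw [max_eq_left h]
    exact le_max_of_le_left le_rfl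

lemma upper (ξ : ℚ_[p]) (hirr : PadicIrrational p ξ) {m : ℝ}
    (hm : ∀ᶠ X : ℝ in atTop, ∃ x y : ℤ,
      0 < max |(x : ℝ)| |(y : ℝ)| ∧ max |(x : ℝ)| |(y : ℝ)| ≤ X ∧
      ‖(y : ℚ_[p]) * ξ - (x : ℚ_[p])‖ ≤ X ^ (-m)) : m ≤ 2 := by
  by_contra hcon
  push_neg at hcon
  have hp1 : (1:ℝ) < p := one_lt_p_real
  have hp0 : (0:ℝ) < p := by linarith
  have hm1 : (1:ℝ) < m := by linarith
  have hm1' : m - 1 ≠ 0 := by intro h; rw [sub_eq_zero] at h; linarith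
  obtain ⟨C, hC⟩ := eventually_atTop.mp hm
  set X1 : ℝ := max C (max 2 ((2*(p:ℝ)) ^ (m-2)⁻¹ + 1)) with hX1def
  have hX1C : C ≤ X1 := le_max_left _ _
  have hX1gt1 : (1:ℝ) < X1 :=
    lt_of_lt_of_le one_lt_two ((le_max_left _ _).trans (le_max_right _ _))
  have hX10 : (0:ℝ) < X1 := by linarith
  have hbig : 2*(p:ℝ) < X1 ^ (m - 2) := by
    have h1 : (2*(p:ℝ)) ^ (m-2)⁻¹ < X1 := by
      calc (2*(p:ℝ)) ^ (m-2)⁻¹ < (2*(p:ℝ)) ^ (m-2)⁻¹ + 1 := lt_add_one _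
        _ ≤ X1 := (le_max_right _ _).trans (le_max_right _ _)
    calc 2*(p:ℝ) = ((2*(p:ℝ)) ^ (m-2)⁻¹) ^ (m-2) :=
          (Real.rpow_inv_rpow (by positivity) (by intro h; rw [sub_eq_zero] at h; linarith)).symm
      _ < X1 ^ (m-2) := Real.rpow_lt_rpow (by positivity) h1 (by linarith)
  obtain ⟨x1, y1, hH1pos, hH1le, hδ1⟩ := hC X1 hX1C
  set H1 : ℝ := max |(x1:ℝ)| |(y1:ℝ)| with hH1
  have h10 : ¬(x1 = 0 ∧ y1 = 0) := by
    rintro ⟨rfl, rfl⟩; simp [hH1] at hH1pos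
  -- primitive point
  set g : ℕ := Int.gcd x1 y1 with hg
  have hgpos : 0 < g := Int.gcd_pos_iff.mpr (by tauto)
  have hgR : (0:ℝ) < (g:ℝ) := by exact_mod_cast hgpos
  set x0 : ℤ := x1 / (g:ℤ) with hx0def
  set y0 : ℤ := y1 / (g:ℤ) with hy0def
  have hx1eq : ((g:ℤ)) * x0 = x1 := Int.mul_ediv_cancel' (Int.gcd_dvd_left _ _)
  have hy1eq : ((g:ℤ)) * y0 = y1 := Int.mul_ediv_cancel' (Int.gcd_dvd_right _ _)
  have hcop : Int.gcd x0 y0 = 1 := Int.gcd_div_gcd_div_gcd (by exact_mod_cast hgpos)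
  have h00 : ¬(x0 = 0 ∧ y0 = 0) := by
    rintro ⟨h1, h2⟩
    apply h10
    constructor <;> [rw [← hx1eq, h1]; rw [← hy1eq, h2]] <;> ring
  set δ0 : ℝ := ‖(y0:ℚ_[p]) * ξ - (x0:ℚ_[p])‖ with hδ0def
  have hδ0pos : 0 < δ0 := err_pos hirr h00
  set H0 : ℝ := max |(x0:ℝ)| |(y0:ℝ)| with hH0
  have hH0one : 1 ≤ H0 := by
    rcases not_and_or.mp h00 with h | h
    · have : (1:ℝ) ≤ |(x0:ℝ)| := by exact_mod_cast Int.one_le_abs (by exact_mod_cast h)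
      exact this.trans (le_max_left _ _)
    · have : (1:ℝ) ≤ |(y0:ℝ)| := by exact_mod_cast Int.one_le_abs (by exact_mod_cast h)
      exact this.trans (le_max_right _ _)
  have hH0pos : (0:ℝ) < H0 := by linarith
  -- δ1 = ‖g‖ δ0 and g·H0 ≤ H1
  have he1 : (y1:ℚ_[p]) * ξ - (x1:ℚ_[p]) = ((g:ℤ):ℚ_[p]) * ((y0:ℚ_[p]) * ξ - (x0:ℚ_[p])) := by
    rw [← hx1eq, ← hy1eq]; push_cast; ring
  have hδ1eq : ‖(y1:ℚ_[p]) * ξ - (x1:ℚ_[p])‖ = ‖((g:ℤ):ℚ_[p])‖ * δ0 := by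
    rw [he1, norm_mul]
  have hgH0 : (g:ℝ) * H0 ≤ H1 := by
    have hxc : (g:ℝ) * |(x0:ℝ)| = |(x1:ℝ)| := by
      rw [← hx1eq]; push_cast; rw [abs_mul, abs_of_pos hgR]
    have hyc : (g:ℝ) * |(y0:ℝ)| = |(y1:ℝ)| := by
      rw [← hy1eq]; push_cast; rw [abs_mul, abs_of_pos hgR]
    calc (g:ℝ) * H0 ≤ max ((g:ℝ) * |(x0:ℝ)|) ((g:ℝ) * |(y0:ℝ)|) :=
          mul_max_le _ _ _ hgR.le
      _ = H1 := by rw [hxc, hyc]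
  -- the fundamental smallness: E ≤ X1^(1-m)
  set E : ℝ := δ0 * H0 with hEdef
  have hE0 : 0 < E := mul_pos hδ0pos hH0pos
  have hgnorm : 1 ≤ (g:ℝ) * ‖((g:ℤ):ℚ_[p])‖ := by
    have := one_le_abs_mul_norm (p := p) (z := (g:ℤ)) (by exact_mod_cast hgpos.ne')
    simpa [abs_of_pos hgR] using this
  have hE : E ≤ X1 ^ (1 - m) := by
    have h1 : E ≤ ((g:ℝ) * ‖((g:ℤ):ℚ_[p])‖) * E := le_mul_of_one_le_left hE0.le hgnorm
    have h2 : ((g:ℝ) * ‖((g:ℤ):ℚ_[p])‖) * E = (‖((g:ℤ):ℚ_[p])‖ * δ0) * ((g:ℝ) * H0) := by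
      rw [hEdef]; ring
    have h3 : (‖((g:ℤ):ℚ_[p])‖ * δ0) * ((g:ℝ) * H0) ≤ X1 ^ (-m) * X1 := by
      apply mul_le_mul (by rw [← hδ1eq]; exact hδ1) (hgH0.trans hH1le) (by positivity) (by positivity)
    have h4 : X1 ^ (-m) * X1 = X1 ^ (1 - m) := by
      rw [show (1 - m) = -m + 1 by ring, Real.rpow_add hX10, Real.rpow_one]
    linarith
  -- second scale
  set T : ℝ := E ^ (-(m-1)⁻¹) with hTdef
  have hT0 : 0 < T := Real.rpow_pos_of_pos hE0 _
  have hexp1 : (1 - m) * (-(m-1)⁻¹) = 1 := by field_simp; ring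
  have hcneg : (-(m-1)⁻¹ : ℝ) ≤ 0 := by
    rw [neg_nonpos]
    exact inv_nonneg.mpr (by linarith)
  have hTX1 : X1 ≤ T := by
    have h1 : (X1 ^ (1 - m)) ^ (-(m-1)⁻¹) ≤ T :=
      Real.rpow_le_rpow_of_nonpos hE0 hE hcneg
    calc X1 = X1 ^ ((1-m) * (-(m-1)⁻¹)) := by rw [hexp1, Real.rpow_one]
      _ = (X1 ^ (1 - m)) ^ (-(m-1)⁻¹) := Real.rpow_mul hX10.le _ _
      _ ≤ T := h1
  set X2 : ℝ := (p:ℝ) * T with hX2def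
  have hX20 : (0:ℝ) < X2 := by positivity
  have hTX2 : T ≤ X2 := le_mul_of_one_le_left hT0.le hp1.le
  have hX2C : C ≤ X2 := hX1C.trans (hTX1.trans hTX2)
  obtain ⟨x2, y2, hH2pos, hH2le, hδ2⟩ := hC X2 hX2C
  set H2 : ℝ := max |(x2:ℝ)| |(y2:ℝ)| with hH2
  set δ2 : ℝ := ‖(y2:ℚ_[p]) * ξ - (x2:ℚ_[p])‖ with hδ2def
  have h20 : ¬(x2 = 0 ∧ y2 = 0) := by
    rintro ⟨rfl, rfl⟩; simp [hH2] at hH2pos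
  -- δ2 ≤ T^(-m) = E^(m/(m-1))
  have hTm : T ^ (-m) = E ^ (m/(m-1)) := by
    rw [hTdef, ← Real.rpow_mul hE0.le]
    congr 1
    field_simp
  have hδ2T : δ2 ≤ E ^ (m/(m-1)) := by
    rw [← hTm]
    calc δ2 ≤ X2 ^ (-m) := hδ2
      _ ≤ T ^ (-m) := Real.rpow_le_rpow_of_nonpos hT0 hTX2 (by linarith)
  -- δ0 * H0^m ≤ 1
  have hδ0H0m : δ0 * H0 ^ m ≤ 1 := by
    have hH0X1 : H0 ≤ X1 := by
      calc H0 = 1 * H0 := (one_mul _).symm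
        _ ≤ (g:ℝ) * H0 := mul_le_mul_of_nonneg_right (by exact_mod_cast hgpos) hH0pos.le
        _ ≤ H1 := hgH0
        _ ≤ X1 := hH1le
    have h1 : H0 ^ (m-1) ≤ X1 ^ (m-1) := Real.rpow_le_rpow hH0pos.le hH0X1 (by linarith)
    have hsplit : H0 ^ m = H0 * H0 ^ (m-1) := by
      have e : m = 1 + (m-1) := by ring
      calc H0 ^ m = H0 ^ (1 + (m-1)) := by rw [← e]
        _ = H0 ^ (1:ℝ) * H0 ^ (m-1) := Real.rpow_add hH0pos _ _
        _ = H0 * H0 ^ (m-1) := by rw [Real.rpow_one]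
    have h2 : δ0 * H0 ^ m = E * H0 ^ (m-1) := by
      rw [hEdef, hsplit]; ring
    have h3 : E * H0 ^ (m-1) ≤ X1 ^ (1-m) * X1 ^ (m-1) :=
      mul_le_mul hE h1 (by positivity) (by positivity)
    have h4 : X1 ^ (1-m) * X1 ^ (m-1) = 1 := by
      rw [← Real.rpow_add hX10, show (1-m) + (m-1) = (0:ℝ) by ring, Real.rpow_zero]
    linarith
  have hδ2δ0 : δ2 ≤ δ0 := by
    have hEm : (E ^ (m/(m-1))) ^ (m-1) ≤ δ0 ^ (m-1) := by
      have e1 : (E ^ (m/(m-1))) ^ (m-1) = E ^ m := by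
        rw [← Real.rpow_mul hE0.le]
        congr 1
        field_simp
      have e2 : E ^ m = δ0 ^ m * H0 ^ m := Real.mul_rpow hδ0pos.le hH0pos.le
      have e3 : δ0 ^ m = δ0 ^ (m-1) * δ0 := by
        calc δ0 ^ m = δ0 ^ ((m-1) + 1) := by rw [show (m-1)+1 = m by ring]
          _ = δ0 ^ (m-1) * δ0 ^ (1:ℝ) := Real.rpow_add hδ0pos _ _
          _ = δ0 ^ (m-1) * δ0 := by rw [Real.rpow_one]
      have e4 : E ^ m = δ0 ^ (m-1) * (δ0 * H0 ^ m) := by rw [e2, e3]; ring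
      rw [e1, e4]
      calc δ0 ^ (m-1) * (δ0 * H0 ^ m) ≤ δ0 ^ (m-1) * 1 :=
            mul_le_mul_of_nonneg_left hδ0H0m (by positivity)
        _ = δ0 ^ (m-1) := mul_one _
    have h5 := (Real.rpow_le_rpow_iff (by positivity) hδ0pos.le
      (by linarith : (0:ℝ) < m - 1)).mp hEm
    exact hδ2T.trans h5
  set D : ℤ := x0 * y2 - x2 * y0 with hD
  by_cases hD0 : D = 0
  · obtain ⟨u, v, huv⟩ := Int.isCoprime_iff_gcd_eq_one.mpr hcop
    set c : ℤ := u * x2 + v * y2 with hc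
    have hDe : x0 * y2 - x2 * y0 = 0 := by rw [← hD]; exact hD0
    have hx2e : x2 = c * x0 := by rw [hc]; linear_combination -x2 * huv - v * hDe
    have hy2e : y2 = c * y0 := by rw [hc]; linear_combination -y2 * huv + u * hDe
    have hc0 : c ≠ 0 := by
      rintro hcz
      apply h20
      rw [hcz] at hx2e hy2e
      constructor <;> [rw [hx2e]; rw [hy2e]] <;> ring
    have he2 : (y2:ℚ_[p]) * ξ - (x2:ℚ_[p]) = ((c:ℤ):ℚ_[p]) * ((y0:ℚ_[p]) * ξ - (x0:ℚ_[p])) := by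
      rw [hx2e, hy2e]; push_cast; ring
    have hδ2eq : δ2 = ‖((c:ℤ):ℚ_[p])‖ * δ0 := by rw [hδ2def, he2, norm_mul]
    have hcH0 : |(c:ℝ)| * H0 ≤ H2 := by
      have hxc : |(c:ℝ)| * |(x0:ℝ)| = |(x2:ℝ)| := by
        rw [hx2e]; push_cast; rw [abs_mul]
      have hyc : |(c:ℝ)| * |(y0:ℝ)| = |(y2:ℝ)| := by
        rw [hy2e]; push_cast; rw [abs_mul]
      calc |(c:ℝ)| * H0 ≤ max (|(c:ℝ)| * |(x0:ℝ)|) (|(c:ℝ)| * |(y0:ℝ)|) :=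
            mul_max_le _ _ _ (abs_nonneg _)
        _ = H2 := by rw [hxc, hyc]
    have hcnorm : 1 ≤ |(c:ℝ)| * ‖((c:ℤ):ℚ_[p])‖ := one_le_abs_mul_norm hc0
    have hEX2 : E ≤ X2 ^ (1-m) := by
      have h1 : E ≤ (|(c:ℝ)| * ‖((c:ℤ):ℚ_[p])‖) * E := le_mul_of_one_le_left hE0.le hcnorm
      have h2 : (|(c:ℝ)| * ‖((c:ℤ):ℚ_[p])‖) * E = (|(c:ℝ)| * H0) * (‖((c:ℤ):ℚ_[p])‖ * δ0) := by
        rw [hEdef]; ring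
      have h3 : (|(c:ℝ)| * H0) * (‖((c:ℤ):ℚ_[p])‖ * δ0) ≤ X2 * X2 ^ (-m) :=
        mul_le_mul (hcH0.trans hH2le) (by rw [← hδ2eq]; exact hδ2) (by positivity) hX20.le
      have h4 : X2 * X2 ^ (-m) = X2 ^ (1-m) := by
        rw [show (1-m) = 1 + (-m) by ring, Real.rpow_add hX20, Real.rpow_one]
      linarith
    have hX2E : X2 ^ (1-m) = (p:ℝ) ^ (1-m) * E := by
      rw [hX2def, Real.mul_rpow hp0.le hT0.le, hTdef, ← Real.rpow_mul hE0.le]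
      congr 1
      field_simp
      rw [show -((1 - m) / (m - 1)) = (1:ℝ) by rw [← neg_div, neg_sub, div_self hm1'], Real.rpow_one]
    have hplt : (p:ℝ) ^ (1-m) < 1 := Real.rpow_lt_one_of_one_lt_of_neg hp1 (by linarith)
    have hpE : (p:ℝ) ^ (1-m) * E < 1 * E := by
      exact mul_lt_mul_of_pos_right hplt hE0
    rw [hX2E] at hEX2
    linarith
  · have hDnorm : ‖((D:ℤ):ℚ_[p])‖ ≤ δ0 := by
      have eD : ((D:ℤ):ℚ_[p]) = (y0:ℚ_[p]) * ((y2:ℚ_[p]) * ξ - (x2:ℚ_[p]))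
          + -((y2:ℚ_[p]) * ((y0:ℚ_[p]) * ξ - (x0:ℚ_[p]))) := by
        rw [hD]; push_cast; ring
      rw [eD]
      refine le_trans (Padic.nonarchimedean _ _) (max_le ?_ ?_)
      · rw [norm_mul]
        calc ‖(y0:ℚ_[p])‖ * δ2 ≤ 1 * δ2 :=
              mul_le_mul_of_nonneg_right (Padic.norm_int_le_one _) (norm_nonneg _)
          _ = δ2 := one_mul _
          _ ≤ δ0 := hδ2δ0
      · rw [norm_neg, norm_mul]
        calc ‖(y2:ℚ_[p])‖ * δ0 ≤ 1 * δ0 :=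
              mul_le_mul_of_nonneg_right (Padic.norm_int_le_one _) hδ0pos.le
          _ = δ0 := one_mul _
    have hone : (1:ℝ) ≤ |(D:ℝ)| * ‖((D:ℤ):ℚ_[p])‖ := one_le_abs_mul_norm hD0
    have hDabs : |(D:ℝ)| ≤ 2 * (H0 * X2) := by
      have hx0b : |(x0:ℝ)| ≤ H0 := le_max_left _ _
      have hy0b : |(y0:ℝ)| ≤ H0 := le_max_right _ _
      have hx2b : |(x2:ℝ)| ≤ X2 := (le_max_left _ _).trans hH2le
      have hy2b : |(y2:ℝ)| ≤ X2 := (le_max_right _ _).trans hH2le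
      have h5 : |(D:ℝ)| ≤ |(x0:ℝ)| * |(y2:ℝ)| + |(x2:ℝ)| * |(y0:ℝ)| := by
        have : ((D:ℝ)) = (x0:ℝ) * (y2:ℝ) - (x2:ℝ) * (y0:ℝ) := by rw [hD]; push_cast; ring
        rw [this, ← abs_mul, ← abs_mul]
        exact abs_sub _ _
      have h6 : |(x0:ℝ)| * |(y2:ℝ)| ≤ H0 * X2 :=
        mul_le_mul hx0b hy2b (abs_nonneg _) hH0pos.le
      have h7 : |(x2:ℝ)| * |(y0:ℝ)| ≤ X2 * H0 :=
        mul_le_mul hx2b hy0b (abs_nonneg _) hX20.le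
      linarith
    have hchain : (1:ℝ) ≤ 2 * (H0 * X2) * δ0 := by
      calc (1:ℝ) ≤ |(D:ℝ)| * ‖((D:ℤ):ℚ_[p])‖ := hone
        _ ≤ |(D:ℝ)| * δ0 := mul_le_mul_of_nonneg_left hDnorm (abs_nonneg _)
        _ ≤ 2 * (H0 * X2) * δ0 := mul_le_mul_of_nonneg_right hDabs hδ0pos.le
    have hET : E * T = E ^ ((m-2)/(m-1)) := by
      calc E * T = E ^ (1:ℝ) * E ^ (-(m-1)⁻¹) := by rw [Real.rpow_one, hTdef]
        _ = E ^ (1 + -(m-1)⁻¹) := (Real.rpow_add hE0 _ _).symm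
        _ = E ^ ((m-2)/(m-1)) := by
            congr 1
            field_simp
            ring
    have hrw : 2 * (H0 * X2) * δ0 = 2 * (p:ℝ) * (E * T) := by
      rw [hX2def, hEdef]; ring
    have hEle : E ^ ((m-2)/(m-1)) ≤ (X1 ^ (1-m)) ^ ((m-2)/(m-1)) :=
      Real.rpow_le_rpow hE0.le hE (div_nonneg (by linarith) (by linarith))
    have hXe : (X1 ^ (1-m)) ^ ((m-2)/(m-1)) = X1 ^ (-(m-2)) := by
      rw [← Real.rpow_mul hX10.le]
      congr 1
      field_simp
      ring
    have hfin : (1:ℝ) ≤ 2 * (p:ℝ) * X1 ^ (-(m-2)) := by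
      calc (1:ℝ) ≤ 2 * (H0 * X2) * δ0 := hchain
        _ = 2 * (p:ℝ) * (E * T) := hrw
        _ = 2 * (p:ℝ) * E ^ ((m-2)/(m-1)) := by rw [hET]
        _ ≤ 2 * (p:ℝ) * X1 ^ (-(m-2)) := by
            apply mul_le_mul_of_nonneg_left (hEle.trans_eq hXe) (by positivity)
    rw [Real.rpow_neg hX10.le] at hfin
    have hXpos : 0 < X1 ^ (m-2) := Real.rpow_pos_of_pos hX10 _
    have h8 : X1 ^ (m-2) ≤ 2*(p:ℝ) := by
      calc X1 ^ (m-2) = X1 ^ (m-2) * 1 := (mul_one _).symm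
        _ ≤ X1 ^ (m-2) * (2*(p:ℝ) * (X1 ^ (m-2))⁻¹) :=
            mul_le_mul_of_nonneg_left hfin hXpos.le
        _ = 2*(p:ℝ) := by field_simp
    linarith


end PadicAuxSec

lemma two_le_sup {S : Set ℝ} (h : ∀ m : ℝ, 1 < m → m < 2 → m ∈ S) :
    2 ≤ sSup (ENNReal.ofReal '' S) := by
  by_contra hc
  push_neg at hc
  set s := sSup (ENNReal.ofReal '' S) with hs
  have hs_top : s ≠ ⊤ := ne_top_of_lt hc
  have h32 : ENNReal.ofReal (3/2) ≤ s :=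
    le_sSup ⟨3/2, h _ (by norm_num) (by norm_num), rfl⟩
  have hs32 : (3/2:ℝ) ≤ s.toReal := by
    rw [← ENNReal.ofReal_le_iff_le_toReal hs_top]
    exact h32
  have hs2 : s.toReal < 2 := by
    have h2 := (ENNReal.toReal_lt_toReal hs_top (by norm_num : (2:ℝ≥0∞) ≠ ⊤)).mpr hc
    simpa using h2
  set m : ℝ := (s.toReal + 2)/2 with hm
  have hm1 : 1 < m := by rw [hm]; linarith
  have hm2 : m < 2 := by rw [hm]; linarith
  have hle : ENNReal.ofReal m ≤ s := le_sSup ⟨m, h m hm1 hm2, rfl⟩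
  rw [ENNReal.ofReal_le_iff_le_toReal hs_top] at hle
  rw [hm] at hle
  linarith

/-- Every irrational `p`-adic number `ξ` satisfies `μ̂(ξ) = 2`, and consequently
`2 ≤ μ̂×(ξ) ≤ 4`. -/
theorem statement1 (p : ℕ) [Fact p.Prime] (ξ : ℚ_[p]) (hξ : PadicIrrational p ξ) :
    muHatExp p ξ = 2 ∧ 2 ≤ muHatTimesExp p ξ ∧ muHatTimesExp p ξ ≤ 4 := by
  have hub : muHatExp p ξ ≤ 2 := by
    apply sSup_le
    rintro e ⟨m, hmS, rfl⟩
    have h2 : m ≤ 2 := upper ξ hξ hmS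
    calc ENNReal.ofReal m ≤ ENNReal.ofReal 2 := ENNReal.ofReal_le_ofReal h2
      _ = 2 := by simp
  have hmemA : ∀ m : ℝ, 1 < m → m < 2 → m ∈ {m : ℝ | ∀ᶠ X : ℝ in atTop, ∃ x y : ℤ,
      0 < max |(x : ℝ)| |(y : ℝ)| ∧ max |(x : ℝ)| |(y : ℝ)| ≤ X ∧
      ‖(y : ℚ_[p]) * ξ - (x : ℚ_[p])‖ ≤ X ^ (-m)} := by
    intro m hm1 hm2
    filter_upwards [lower ξ hξ hm1 hm2] with X hsol
    obtain ⟨x, y, hx0, hy0, hx, hy, herr⟩ := hsol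
    have h1x : (1:ℝ) ≤ |(x:ℝ)| := by exact_mod_cast Int.one_le_abs hx0
    exact ⟨x, y, lt_of_lt_of_le one_pos (h1x.trans (le_max_left _ _)),
      max_le hx hy, herr⟩
  have hmemM : ∀ m : ℝ, 1 < m → m < 2 → m ∈ {m : ℝ | ∀ᶠ X : ℝ in atTop, ∃ x y : ℤ,
      0 < Real.sqrt |(x : ℝ) * (y : ℝ)| ∧ Real.sqrt |(x : ℝ) * (y : ℝ)| ≤ X ∧
      ‖(y : ℚ_[p]) * ξ - (x : ℚ_[p])‖ ≤ X ^ (-m)} := by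
    intro m hm1 hm2
    filter_upwards [lower ξ hξ hm1 hm2, eventually_ge_atTop (0:ℝ)] with X hsol hX0
    obtain ⟨x, y, hx0, hy0, hx, hy, herr⟩ := hsol
    have hxy : ((x:ℝ) * (y:ℝ)) ≠ 0 :=
      mul_ne_zero (by exact_mod_cast hx0) (by exact_mod_cast hy0)
    refine ⟨x, y, Real.sqrt_pos.mpr (abs_pos.mpr hxy), ?_, herr⟩
    have h1 : |(x:ℝ) * (y:ℝ)| ≤ X^2 := by
      rw [abs_mul]
      calc |(x:ℝ)| * |(y:ℝ)| ≤ X * X :=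
            mul_le_mul hx hy (abs_nonneg _) hX0
        _ = X^2 := (sq X).symm
    calc Real.sqrt |(x:ℝ) * (y:ℝ)| ≤ Real.sqrt (X^2) := Real.sqrt_le_sqrt h1
      _ = X := Real.sqrt_sq hX0
  have hlbA : 2 ≤ muHatExp p ξ := two_le_sup hmemA
  have hlbM : 2 ≤ muHatTimesExp p ξ := two_le_sup hmemM
  have hubM : muHatTimesExp p ξ ≤ 4 := by
    apply sSup_le
    rintro e ⟨m, hmS, rfl⟩
    have hm4 : m ≤ 4 := by
      rcases le_or_gt m 0 with hm0 | hm0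
      · linarith
      · have hsq : Tendsto Real.sqrt atTop atTop := by
          rw [tendsto_atTop_atTop]
          intro b
          refine ⟨(max b 0)^2, fun a ha => ?_⟩
          calc b ≤ max b 0 := le_max_left _ _
            _ = Real.sqrt ((max b 0)^2) := (Real.sqrt_sq (le_max_right _ _)).symm
            _ ≤ Real.sqrt a := Real.sqrt_le_sqrt ha
        have hev : ∀ᶠ Y : ℝ in atTop, ∃ x y : ℤ,
            0 < max |(x : ℝ)| |(y : ℝ)| ∧ max |(x : ℝ)| |(y : ℝ)| ≤ Y ∧
            ‖(y : ℚ_[p]) * ξ - (x : ℚ_[p])‖ ≤ Y ^ (-(m/2)) := by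
          filter_upwards [hsq.eventually hmS, eventually_ge_atTop (1:ℝ)] with Y hsol hY1
          obtain ⟨x, y, h0, hle, herr⟩ := hsol
          have hY0 : (0:ℝ) < Y := lt_of_lt_of_le one_pos hY1
          have hxy : ((x:ℝ) * (y:ℝ)) ≠ 0 := by
            intro h
            rw [h] at h0
            simp at h0
          have hx0 : x ≠ 0 := by
            rcases mul_ne_zero_iff.mp hxy with ⟨h1, _⟩
            exact_mod_cast h1
          have hy0 : y ≠ 0 := by
            rcases mul_ne_zero_iff.mp hxy with ⟨_, h2⟩
            exact_mod_cast h2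
          have h1x : (1:ℝ) ≤ |(x:ℝ)| := by exact_mod_cast Int.one_le_abs hx0
          have h1y : (1:ℝ) ≤ |(y:ℝ)| := by exact_mod_cast Int.one_le_abs hy0
          refine ⟨x, y, lt_of_lt_of_le one_pos (h1x.trans (le_max_left _ _)), ?_, ?_⟩
          · have hmaxmul : max |(x:ℝ)| |(y:ℝ)| ≤ |(x:ℝ)| * |(y:ℝ)| := by
              apply max_le
              · exact le_mul_of_one_le_right (abs_nonneg _) h1y
              · exact le_mul_of_one_le_left (abs_nonneg _) h1x
            have hsqle : |(x:ℝ)| * |(y:ℝ)| ≤ Y := by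
              rw [← abs_mul]
              calc |(x:ℝ) * (y:ℝ)| = Real.sqrt |(x:ℝ) * (y:ℝ)| ^ 2 :=
                    (Real.sq_sqrt (abs_nonneg _)).symm
                _ ≤ Real.sqrt Y ^ 2 := by
                    apply pow_le_pow_left₀ (Real.sqrt_nonneg _) hle
                _ = Y := Real.sq_sqrt hY0.le
            exact hmaxmul.trans hsqle
          · calc ‖(y : ℚ_[p]) * ξ - (x : ℚ_[p])‖ ≤ (Real.sqrt Y) ^ (-m) := herr
              _ = Y ^ (-(m/2)) := by
                  rw [Real.sqrt_eq_rpow, ← Real.rpow_mul hY0.le]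
                  congr 1
                  ring
        have := upper ξ hξ hev
        linarith
    calc ENNReal.ofReal m ≤ ENNReal.ofReal 4 := ENNReal.ofReal_le_ofReal hm4
      _ = 4 := by simp
  exact ⟨le_antisymm hub hlbA, hlbM, hubM⟩
end

section
/- With respect to an additive Haar measure on ℚ_p, almost every p-adic number ξ is irrational and satisfies μ×(ξ) = 2; that is, the set of ξ ∈ ℚ_p such that ξ is rational or μ×(ξ) ≠ 2 is a null set. -/
open Filter MeasureTheory
open scoped ENNReal

namespace AuxPadic

variable (p : ℕ) [hp : Fact p.Prime]

/-- The solution set appearing in `muTimesExp`. -/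
def solSet (m : ℝ) (ξ : ℚ_[p]) : Set (ℤ × ℤ) :=
  {q : ℤ × ℤ | q.1 ≠ 0 ∧ q.2 ≠ 0 ∧
    0 < ‖(q.2 : ℚ_[p]) * ξ - (q.1 : ℚ_[p])‖ ∧
    ‖(q.2 : ℚ_[p]) * ξ - (q.1 : ℚ_[p])‖ ≤ (Real.sqrt |(q.1 : ℝ) * (q.2 : ℝ)|) ^ (-m)}

lemma muTimesExp_eq (ξ : ℚ_[p]) :
    muTimesExp p ξ = sSup (ENNReal.ofReal '' {m : ℝ | (solSet p m ξ).Infinite}) := rfl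

lemma one_le_sqrt_abs {x y : ℤ} (hx : x ≠ 0) (hy : y ≠ 0) :
    1 ≤ Real.sqrt |(x : ℝ) * (y : ℝ)| := by
  rw [show (1:ℝ) = Real.sqrt 1 by simp]
  apply Real.sqrt_le_sqrt
  rw [abs_mul]
  have h1 : (1:ℝ) ≤ |(x:ℝ)| := by
    rw [← Int.cast_abs]; exact_mod_cast Int.one_le_abs hx
  have h2 : (1:ℝ) ≤ |(y:ℝ)| := by
    rw [← Int.cast_abs]; exact_mod_cast Int.one_le_abs hy
  nlinarith

lemma solSet_antitone {m m' : ℝ} (h : m' ≤ m) (ξ : ℚ_[p]) :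
    solSet p m ξ ⊆ solSet p m' ξ := by
  rintro ⟨x, y⟩ ⟨hx, hy, hpos, hle⟩
  refine ⟨hx, hy, hpos, hle.trans ?_⟩
  exact Real.rpow_le_rpow_of_exponent_le (one_le_sqrt_abs hx hy) (by linarith)

lemma norm_intCast_eq {y : ℤ} (hy : y ≠ 0) :
    ‖(y : ℚ_[p])‖ = (p : ℝ) ^ (-(padicValInt p y : ℤ)) := by
  rw [Padic.norm_eq_zpow_neg_valuation (by exact_mod_cast hy), Padic.valuation_intCast]

lemma dirichlet (ξ : ℚ_[p]) (hξ : ‖ξ‖ ≤ 1) (n : ℕ) :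
    ∃ x y : ℤ, ¬(x = 0 ∧ y = 0) ∧ |x| ≤ (p : ℤ) ^ ((n + 1) / 2) ∧
      |y| ≤ (p : ℤ) ^ ((n + 1) / 2) ∧
      ‖(y : ℚ_[p]) * ξ - (x : ℚ_[p])‖ ≤ (p : ℝ) ^ (-(n : ℤ)) := by
  set s := (n + 1) / 2 with hs
  set ζ : ℤ_[p] := ⟨ξ, hξ⟩ with hζ
  haveI : NeZero (p ^ n) := ⟨pow_ne_zero _ hp.1.pos.ne'⟩
  set F : Fin (p ^ s + 1) × Fin (p ^ s + 1) → ZMod (p ^ n) :=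
    fun ab => PadicInt.toZModPow n ((ab.2.val : ℤ_[p]) * ζ - (ab.1.val : ℤ_[p])) with hF
  have hps : 1 ≤ p ^ s := Nat.one_le_pow _ _ hp.1.pos
  have hcard : Fintype.card (ZMod (p ^ n)) < Fintype.card (Fin (p ^ s + 1) × Fin (p ^ s + 1)) := by
    rw [ZMod.card, Fintype.card_prod, Fintype.card_fin]
    have h2s : p ^ n ≤ p ^ s * p ^ s := by
      rw [← pow_add]
      exact Nat.pow_le_pow_right hp.1.pos (by omega)
    nlinarith
  obtain ⟨a, b, hab, hFeq⟩ := Fintype.exists_ne_map_eq_of_card_lt F hcard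
  refine ⟨(a.1.val : ℤ) - b.1.val, (a.2.val : ℤ) - b.2.val, ?_, ?_, ?_, ?_⟩
  · rintro ⟨h1, h2⟩
    apply hab
    have e1 : a.1.val = b.1.val := by omega
    have e2 : a.2.val = b.2.val := by omega
    exact Prod.ext (Fin.ext e1) (Fin.ext e2)
  · have h1 := a.1.isLt; have h2 := b.1.isLt
    rw [abs_le]
    constructor <;> [skip; skip] <;>
      · have : (a.1.val : ℤ) < (p:ℤ)^s + 1 := by exact_mod_cast h1
        have : (b.1.val : ℤ) < (p:ℤ)^s + 1 := by exact_mod_cast h2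
        omega
  · have h1 := a.2.isLt; have h2 := b.2.isLt
    rw [abs_le]
    constructor <;> [skip; skip] <;>
      · have : (a.2.val : ℤ) < (p:ℤ)^s + 1 := by exact_mod_cast h1
        have : (b.2.val : ℤ) < (p:ℤ)^s + 1 := by exact_mod_cast h2
        omega
  · set z : ℤ_[p] := (((a.2.val : ℤ) - b.2.val : ℤ) : ℤ_[p]) * ζ -
      (((a.1.val : ℤ) - b.1.val : ℤ) : ℤ_[p]) with hz
    have hzeq : z = ((a.2.val : ℤ_[p]) * ζ - (a.1.val : ℤ_[p])) -
        ((b.2.val : ℤ_[p]) * ζ - (b.1.val : ℤ_[p])) := by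
      rw [hz]; push_cast; ring
    have hker : PadicInt.toZModPow n z = 0 := by
      simp only [hF] at hFeq
      rw [hzeq, map_sub, hFeq, sub_self]
    have hmem : z ∈ (Ideal.span {(p : ℤ_[p]) ^ n} : Ideal ℤ_[p]) := by
      rw [← PadicInt.ker_toZModPow]; exact hker
    have hnorm : ‖z‖ ≤ (p : ℝ) ^ (-(n : ℤ)) :=
      (PadicInt.norm_le_pow_iff_mem_span_pow z n).mpr hmem
    have hcoe : ((z : ℚ_[p])) =
        ((((a.2.val : ℤ) - b.2.val : ℤ) : ℚ_[p])) * ξ - (((a.1.val : ℤ) - b.1.val : ℤ) : ℚ_[p]) := by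
      rw [hz]; push_cast [hζ]; rfl
    calc ‖(((a.2.val : ℤ) - b.2.val : ℤ) : ℚ_[p]) * ξ - (((a.1.val : ℤ) - b.1.val : ℤ) : ℚ_[p])‖
        = ‖(z : ℚ_[p])‖ := by rw [hcoe]
      _ = ‖z‖ := (PadicInt.norm_def).symm
      _ ≤ _ := hnorm

lemma one_le_abs_mul {x y : ℤ} (hx : x ≠ 0) (hy : y ≠ 0) :
    1 ≤ |(x : ℝ) * (y : ℝ)| := by
  rw [abs_mul]
  have h1 : (1:ℝ) ≤ |(x:ℝ)| := by
    rw [← Int.cast_abs]; exact_mod_cast Int.one_le_abs hx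
  have h2 : (1:ℝ) ≤ |(y:ℝ)| := by
    rw [← Int.cast_abs]; exact_mod_cast Int.one_le_abs hy
  nlinarith

lemma sub_ne_zero_of_irr {ξ : ℚ_[p]} (hξ : PadicIrrational p ξ) {x y : ℤ} (hy : y ≠ 0) :
    (y : ℚ_[p]) * ξ - (x : ℚ_[p]) ≠ 0 := by
  intro h
  have hy' : ((y : ℚ) : ℚ_[p]) ≠ 0 := by
    rw [Rat.cast_intCast]
    exact_mod_cast hy
  apply hξ ((x : ℚ) / (y : ℚ))
  rw [Rat.cast_div, div_eq_iff hy', Rat.cast_intCast, Rat.cast_intCast]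
  have := sub_eq_zero.mp h
  rw [← this]; ring

lemma exists_sol_small {ξ : ℚ_[p]} (hξ : PadicIrrational p ξ) {m : ℝ} (hm : m < 2)
    {ε : ℝ} (hε : 0 < ε) :
    ∃ q ∈ solSet p m ξ, ‖(q.2 : ℚ_[p]) * ξ - (q.1 : ℚ_[p])‖ < ε := by
  have hp1 : 1 < (p : ℝ) := by exact_mod_cast hp.1.one_lt
  have hp0 : (0:ℝ) < p := by linarith
  have hξ0 : ξ ≠ 0 := by
    intro h
    exact hξ 0 (by simp [h])
  -- find k with ‖p^k ξ‖ ≤ 1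
  obtain ⟨k, hk⟩ := exists_nat_gt ‖ξ‖
  have hkbound : ‖ξ‖ ≤ (p:ℝ)^(k:ℕ) := by
    refine hk.le.trans ?_
    calc (k:ℝ) ≤ ((2^k : ℕ) : ℝ) := by exact_mod_cast (Nat.lt_two_pow_self (n := k)).le
      _ ≤ ((p^k : ℕ) : ℝ) := by
          exact_mod_cast Nat.pow_le_pow_left hp.1.two_le k
      _ = (p:ℝ)^(k:ℕ) := by push_cast; ring
  set η : ℚ_[p] := (p:ℚ_[p])^(k:ℕ) * ξ with hηdef
  have hη0 : η ≠ 0 := by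
    apply mul_ne_zero _ hξ0
    apply pow_ne_zero
    exact_mod_cast hp.1.ne_zero
  have hη1 : ‖η‖ ≤ 1 := by
    rw [hηdef, norm_mul, Padic.norm_p_pow, zpow_neg, zpow_natCast]
    have hpk : (0:ℝ) < (p:ℝ)^(k:ℕ) := by positivity
    calc ((p:ℝ)^(k:ℕ))⁻¹ * ‖ξ‖ ≤ ((p:ℝ)^(k:ℕ))⁻¹ * (p:ℝ)^(k:ℕ) := by
          exact mul_le_mul_of_nonneg_left hkbound (by positivity)
      _ = 1 := inv_mul_cancel₀ hpk.ne'
  -- lower bound for ‖η‖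
  obtain ⟨w, hw⟩ : ∃ w : ℕ, (p:ℝ)^(-(w:ℤ)) ≤ ‖η‖ := by
    obtain ⟨w, hw⟩ := exists_pow_lt_of_lt_one (norm_pos_iff.mpr hη0)
      (inv_lt_one_of_one_lt₀ hp1)
    exact ⟨w, by rw [zpow_neg, zpow_natCast, ← inv_pow]; exact hw.le⟩
  -- choose n
  obtain ⟨N3, hN3⟩ := exists_pow_lt_of_lt_one hε (inv_lt_one_of_one_lt₀ hp1)
  obtain ⟨N4, hN4⟩ := exists_nat_ge (m * (1 + k) / (2 - m))
  set n := max (max (2*w + 2) 2) (max N3 N4) with hn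
  have hn1 : 2*w + 2 ≤ n := le_trans (le_max_left _ _) (le_max_left _ _)
  have hn2 : 2 ≤ n := le_trans (le_max_right _ _) (le_max_left _ _)
  have hn3 : N3 ≤ n := le_trans (le_max_left _ _) (le_max_right _ _)
  have hn4 : N4 ≤ n := le_trans (le_max_right _ _) (le_max_right _ _)
  set s := (n + 1) / 2 with hs
  obtain ⟨x, y, hxy0, hxb, hyb, hnorm⟩ := dirichlet p η hη1 n
  -- y ≠ 0
  have hy : y ≠ 0 := by
    intro h0
    have hx0 : x ≠ 0 := fun hx0 => hxy0 ⟨hx0, h0⟩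
    rw [h0] at hnorm
    simp only [Int.cast_zero, zero_mul, zero_sub, norm_neg] at hnorm
    have hdvd : ((p:ℤ)^n ∣ x) := by
      have := (Padic.norm_int_le_pow_iff_dvd (p := p) x n).mp hnorm
      exact_mod_cast this
    have hle : (p:ℤ)^n ≤ |x| := Int.le_of_dvd (abs_pos.mpr hx0) ((dvd_abs _ _).mpr hdvd)
    have hlt : (p:ℤ)^((n+1)/2) < (p:ℤ)^n := by
      apply pow_lt_pow_right₀ (by exact_mod_cast hp.1.one_lt)
      omega
    omega
  -- x ≠ 0
  have hx : x ≠ 0 := by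
    intro h0
    rw [h0] at hnorm
    simp only [Int.cast_zero, sub_zero] at hnorm
    rw [norm_mul] at hnorm
    have hwn : w ≤ n := by omega
    have hnle : ‖(y:ℚ_[p])‖ ≤ (p:ℝ)^(-((n - w : ℕ):ℤ)) := by
      have hpos : (0:ℝ) < (p:ℝ)^(-(w:ℤ)) := by positivity
      have h1 : ‖(y:ℚ_[p])‖ * (p:ℝ)^(-(w:ℤ)) ≤ (p:ℝ)^(-(n:ℤ)) :=
        le_trans (mul_le_mul_of_nonneg_left hw (norm_nonneg _)) hnorm
      have h2 : ‖(y:ℚ_[p])‖ ≤ (p:ℝ)^(-(n:ℤ)) * (p:ℝ)^((w:ℤ)) := by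
        rw [← le_div_iff₀ hpos] at h1
        rwa [div_eq_mul_inv, ← zpow_neg, neg_neg] at h1
      rw [← zpow_add₀ (by positivity : (p:ℝ) ≠ 0)] at h2
      have : -(n:ℤ) + (w:ℤ) = -((n - w : ℕ):ℤ) := by omega
      rwa [this] at h2
    have hdvd : ((p:ℤ)^(n-w) ∣ y) := by
      have := (Padic.norm_int_le_pow_iff_dvd (p := p) y (n-w)).mp hnle
      exact_mod_cast this
    have hle : (p:ℤ)^(n-w) ≤ |y| := Int.le_of_dvd (abs_pos.mpr hy) ((dvd_abs _ _).mpr hdvd)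
    have hlt : (p:ℤ)^((n+1)/2) < (p:ℤ)^(n-w) := by
      apply pow_lt_pow_right₀ (by exact_mod_cast hp.1.one_lt)
      omega
    omega
  -- the candidate pair
  have hYne : (p:ℤ)^(k:ℕ) * y ≠ 0 :=
    mul_ne_zero (pow_ne_zero _ (by exact_mod_cast hp.1.ne_zero)) hy
  have hcast : (((p:ℤ)^(k:ℕ) * y : ℤ) : ℚ_[p]) * ξ - (x:ℚ_[p]) =
      (y:ℚ_[p]) * η - (x:ℚ_[p]) := by
    rw [hηdef]; push_cast; ring
  have hnorm' : ‖(((p:ℤ)^(k:ℕ) * y : ℤ) : ℚ_[p]) * ξ - (x:ℚ_[p])‖ ≤ (p:ℝ)^(-(n:ℤ)) := by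
    rw [hcast]; exact hnorm
  have hmain : (p:ℝ)^(-(n:ℤ)) ≤
      (Real.sqrt |(x:ℝ) * (((p:ℤ)^(k:ℕ) * y : ℤ):ℝ)|) ^ (-m) := by
    set Y : ℤ := (p:ℤ)^(k:ℕ) * y with hY
    set t : ℝ := |(x:ℝ) * (Y:ℝ)| with htdef
    have ht0 : (0:ℝ) ≤ t := abs_nonneg _
    have ht1 : (1:ℝ) ≤ t := one_le_abs_mul hx hYne
    have hsqt : (Real.sqrt t) ^ (-m) = t ^ (-(m/2)) := by
      rw [Real.sqrt_eq_rpow, ← Real.rpow_mul ht0]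
      congr 1; ring
    rw [hsqt]
    have htle : t ≤ (p:ℝ)^((n+1+k : ℕ)) := by
      have hxR : |(x:ℝ)| ≤ (p:ℝ)^(s:ℕ) := by
        rw [← Int.cast_abs]
        calc ((|x|:ℤ):ℝ) ≤ (((p:ℤ)^((n+1)/2) : ℤ):ℝ) := by exact_mod_cast hxb
          _ = (p:ℝ)^(s:ℕ) := by push_cast [hs]; ring
      have hyR : |(y:ℝ)| ≤ (p:ℝ)^(s:ℕ) := by
        rw [← Int.cast_abs]
        calc ((|y|:ℤ):ℝ) ≤ (((p:ℤ)^((n+1)/2) : ℤ):ℝ) := by exact_mod_cast hyb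
          _ = (p:ℝ)^(s:ℕ) := by push_cast [hs]; ring
      have hYR : |(Y:ℝ)| ≤ (p:ℝ)^(k:ℕ) * (p:ℝ)^(s:ℕ) := by
        rw [hY]
        push_cast
        rw [abs_mul, abs_pow, abs_of_pos hp0]
        exact mul_le_mul_of_nonneg_left hyR (by positivity)
      have h2s : (p:ℝ)^(s:ℕ) * ((p:ℝ)^(k:ℕ) * (p:ℝ)^(s:ℕ)) ≤ (p:ℝ)^((n+1+k : ℕ)) := by
        rw [← pow_add, ← pow_add]
        apply pow_le_pow_right₀ hp1.le
        omega
      calc t = |(x:ℝ)| * |(Y:ℝ)| := by rw [htdef, abs_mul]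
        _ ≤ (p:ℝ)^(s:ℕ) * ((p:ℝ)^(k:ℕ) * (p:ℝ)^(s:ℕ)) := by
            apply mul_le_mul hxR hYR (abs_nonneg _) (by positivity)
        _ ≤ _ := h2s
    rcases le_or_gt m 0 with hm0 | hm0
    · have h1 : (p:ℝ)^(-(n:ℤ)) ≤ 1 := by
        rw [zpow_neg, zpow_natCast]
        apply inv_le_one_of_one_le₀
        exact one_le_pow₀ hp1.le
      refine h1.trans ?_
      calc (1:ℝ) = t ^ (0:ℝ) := (Real.rpow_zero t).symm
        _ ≤ t ^ (-(m/2)) := Real.rpow_le_rpow_of_exponent_le ht1 (by linarith)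
    · have hstep : ((p:ℝ)^((n+1+k : ℕ))) ^ (-(m/2)) ≤ t ^ (-(m/2)) :=
        Real.rpow_le_rpow_of_nonpos (by linarith) htle (by linarith)
      refine le_trans ?_ hstep
      have hN4' : m * (1 + (k:ℝ)) / (2 - m) ≤ (n:ℝ) := by
        refine hN4.trans ?_
        exact_mod_cast hn4
      have hineq : m * (1 + (k:ℝ)) ≤ (n:ℝ) * (2 - m) :=
        (div_le_iff₀ (by linarith : (0:ℝ) < 2 - m)).mp hN4'
      have hexp : (-(n:ℝ)) ≤ ((n+1+k : ℕ):ℝ) * (-(m/2)) := by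
        push_cast
        nlinarith
      calc (p:ℝ)^(-(n:ℤ)) = (p:ℝ) ^ (-(n:ℝ)) := by
            rw [← Real.rpow_intCast (p:ℝ) (-(n:ℤ))]
            congr 1
            push_cast
            ring
        _ ≤ (p:ℝ) ^ (((n+1+k : ℕ):ℝ) * (-(m/2))) :=
            Real.rpow_le_rpow_of_exponent_le hp1.le hexp
        _ = ((p:ℝ)^((n+1+k : ℕ))) ^ (-(m/2)) := by
            rw [← Real.rpow_natCast (p:ℝ) (n+1+k), ← Real.rpow_mul hp0.le]
  refine ⟨(x, (p:ℤ)^(k:ℕ) * y), ⟨hx, hYne, ?_, ?_⟩, ?_⟩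
  · exact norm_pos_iff.mpr (sub_ne_zero_of_irr p hξ hYne)
  · exact hnorm'.trans hmain
  · refine lt_of_le_of_lt hnorm' ?_
    calc (p:ℝ)^(-(n:ℤ)) = ((p:ℝ)⁻¹)^(n:ℕ) := by
          rw [zpow_neg, zpow_natCast, inv_pow]
      _ ≤ ((p:ℝ)⁻¹)^(N3:ℕ) := by
          apply pow_le_pow_of_le_one (by positivity) (by
            apply inv_le_one_of_one_le₀ hp1.le) hn3
      _ < ε := hN3


lemma solSet_infinite {ξ : ℚ_[p]} (hξ : PadicIrrational p ξ) {m : ℝ} (hm : m < 2) :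
    (solSet p m ξ).Infinite := by
  by_contra hinf
  rw [Set.not_infinite] at hinf
  set T := hinf.toFinset with hT
  rcases T.eq_empty_or_nonempty with hemp | hne
  · obtain ⟨q, hq, -⟩ := exists_sol_small p hξ hm (ε := 1) one_pos
    have : q ∈ T := by rw [hT, Set.Finite.mem_toFinset]; exact hq
    rw [hemp] at this
    exact absurd this (Finset.notMem_empty q)
  · set f : ℤ × ℤ → ℝ := fun q => ‖(q.2 : ℚ_[p]) * ξ - (q.1 : ℚ_[p])‖ with hf
    have hne' : (T.image f).Nonempty := hne.image f
    set ε := (T.image f).min' hne' with hε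
    have hεpos : 0 < ε := by
      obtain ⟨q, hqT, hqf⟩ := Finset.mem_image.mp ((T.image f).min'_mem hne')
      have hqsol : q ∈ solSet p m ξ := by
        rwa [hT, Set.Finite.mem_toFinset] at hqT
      rw [hε, ← hqf]
      exact hqsol.2.2.1
    obtain ⟨q, hq, hqlt⟩ := exists_sol_small p hξ hm hεpos
    have hqT : q ∈ T := by rw [hT, Set.Finite.mem_toFinset]; exact hq
    have : ε ≤ f q := Finset.min'_le _ _ (Finset.mem_image_of_mem f hqT)
    rw [hf] at this
    exact absurd hqlt (not_lt.mpr this)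

lemma two_le_muTimesExp {ξ : ℚ_[p]} (hξ : PadicIrrational p ξ) : 2 ≤ muTimesExp p ξ := by
  have key : ∀ m : ℝ, m < 2 → ENNReal.ofReal m ≤ muTimesExp p ξ := fun m hm =>
    le_sSup ⟨m, solSet_infinite p hξ hm, rfl⟩
  by_contra hlt
  push_neg at hlt
  have hne : muTimesExp p ξ ≠ ⊤ := (hlt.trans_le le_top).ne
  set t := (muTimesExp p ξ).toReal with ht
  have ht2 : t < 2 := by
    have h2 : ((2:ℝ≥0∞)).toReal = 2 := by simp
    rw [ht, ← h2]
    exact ENNReal.toReal_strict_mono (by simp) hlt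
  have h0t : 0 ≤ t := ENNReal.toReal_nonneg
  have hkey := key ((t+2)/2) (by linarith)
  rw [← ENNReal.ofReal_toReal hne, ← ht] at hkey
  have : (t+2)/2 ≤ t := (ENNReal.ofReal_le_ofReal_iff h0t).mp hkey
  linarith

section MeasureSide

variable [MeasurableSpace ℚ_[p]] [BorelSpace ℚ_[p]] (μ : Measure ℚ_[p]) [μ.IsAddHaarMeasure]

lemma measure_closedBall_translate (z : ℚ_[p]) (r : ℝ) :
    μ (Metric.closedBall z r) = μ (Metric.closedBall 0 r) := by
  have h : Metric.closedBall z r = (fun x => (-z) + x) ⁻¹' (Metric.closedBall 0 r) := by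
    ext w
    simp only [Set.mem_preimage, Metric.mem_closedBall, dist_eq_norm, sub_zero]
    rw [show -z + w = w - z by ring]
  rw [h, measure_preimage_add]

lemma unit_ball_eq_union (j : ℕ) :
    Metric.closedBall (0:ℚ_[p]) 1 =
      ⋃ i ∈ Finset.range (p ^ j), Metric.closedBall ((i:ℚ_[p])) ((p:ℝ)^(-(j:ℤ))) := by
  haveI : NeZero (p ^ j) := ⟨pow_ne_zero _ hp.1.pos.ne'⟩
  have hp1 : 1 < (p : ℝ) := by exact_mod_cast hp.1.one_lt
  ext ξ
  simp only [Metric.mem_closedBall, dist_zero_right, Set.mem_iUnion, Finset.mem_range,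
    dist_eq_norm, sub_zero, exists_prop]
  constructor
  · intro hξ
    set ζ : ℤ_[p] := ⟨ξ, hξ⟩ with hζ
    set i := (PadicInt.toZModPow j ζ).val with hi
    refine ⟨i, ZMod.val_lt _, ?_⟩
    have hmem : ζ - (i : ℤ_[p]) ∈ (Ideal.span {(p:ℤ_[p])^j} : Ideal ℤ_[p]) := by
      rw [← PadicInt.ker_toZModPow, RingHom.mem_ker, map_sub, map_natCast, hi,
        ZMod.natCast_val, ZMod.cast_id, sub_self]
    have hn : ‖ζ - (i : ℤ_[p])‖ ≤ (p:ℝ)^(-(j:ℤ)) :=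
      (PadicInt.norm_le_pow_iff_mem_span_pow _ j).mpr hmem
    have hco : (((ζ - (i:ℤ_[p]) : ℤ_[p]) : ℚ_[p])) = ξ - ((i:ℕ):ℚ_[p]) := by
      push_cast
      rfl
    rw [← hco, ← PadicInt.norm_def]
    exact hn
  · rintro ⟨i, hi, hnorm⟩
    have h1 : ‖((i:ℕ):ℚ_[p])‖ ≤ 1 := by
      have := Padic.norm_int_le_one (p := p) (i : ℤ)
      simpa using this
    have hple : (p:ℝ)^(-(j:ℤ)) ≤ 1 := by
      apply zpow_le_one_of_nonpos₀ hp1.le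
      omega
    have h2 : ‖ξ - ((i:ℕ):ℚ_[p])‖ ≤ 1 := hnorm.trans hple
    calc ‖ξ‖ = ‖(ξ - ((i:ℕ):ℚ_[p])) + ((i:ℕ):ℚ_[p])‖ := by ring_nf
      _ ≤ max ‖ξ - ((i:ℕ):ℚ_[p])‖ ‖((i:ℕ):ℚ_[p])‖ := Padic.nonarchimedean _ _
      _ ≤ 1 := max_le h2 h1

lemma measure_small_ball (j : ℕ) :
    ((p:ℝ≥0∞) ^ (j:ℕ)) * μ (Metric.closedBall (0:ℚ_[p]) ((p:ℝ)^(-(j:ℤ)))) =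
      μ (Metric.closedBall (0:ℚ_[p]) 1) := by
  have hp1 : 1 < (p : ℝ) := by exact_mod_cast hp.1.one_lt
  have hdisj : (↑(Finset.range (p ^ j)) : Set ℕ).PairwiseDisjoint
      (fun i => Metric.closedBall ((i:ℚ_[p])) ((p:ℝ)^(-(j:ℤ)))) := by
    intro a ha b hb hab
    simp only [Finset.coe_range, Set.mem_Iio] at ha hb
    rw [Function.onFun, Set.disjoint_left]
    intro ξ hξa hξb
    apply hab
    rw [Metric.mem_closedBall, dist_eq_norm] at hξa hξb
    have hnorm : ‖((a:ℚ_[p])) - ((b:ℚ_[p]))‖ ≤ (p:ℝ)^(-(j:ℤ)) := by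
      calc ‖((a:ℚ_[p])) - ((b:ℚ_[p]))‖ = ‖(((a:ℚ_[p])) - ξ) + (ξ - ((b:ℚ_[p])))‖ := by ring_nf
        _ ≤ max ‖((a:ℚ_[p])) - ξ‖ ‖ξ - ((b:ℚ_[p]))‖ := Padic.nonarchimedean _ _
        _ ≤ (p:ℝ)^(-(j:ℤ)) := by
            apply max_le _ hξb
            rw [← norm_neg]
            simpa using hξa
    have hdvd : ((p:ℤ)^j ∣ ((a:ℤ) - (b:ℤ))) := by
      have hcast : (((a:ℤ) - (b:ℤ) : ℤ) : ℚ_[p]) = ((a:ℚ_[p])) - ((b:ℚ_[p])) := by push_cast; ring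
      have := (Padic.norm_int_le_pow_iff_dvd (p := p) ((a:ℤ) - (b:ℤ)) j).mp
        (by rw [hcast]; exact hnorm)
      exact_mod_cast this
    have habs : |((a:ℤ) - (b:ℤ))| < (p:ℤ)^j := by
      have ha' : (a:ℤ) < (p:ℤ)^j := by exact_mod_cast ha
      have hb' : (b:ℤ) < (p:ℤ)^j := by exact_mod_cast hb
      rw [abs_lt]
      omega
    have := Int.eq_zero_of_abs_lt_dvd hdvd habs
    omega
  have hmeas : ∀ i ∈ Finset.range (p ^ j),
      MeasurableSet (Metric.closedBall ((i:ℚ_[p])) ((p:ℝ)^(-(j:ℤ)))) :=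
    fun i _ => measurableSet_closedBall
  rw [unit_ball_eq_union p j, measure_biUnion_finset hdisj hmeas]
  have : ∀ i ∈ Finset.range (p ^ j),
      μ (Metric.closedBall ((i:ℚ_[p])) ((p:ℝ)^(-(j:ℤ)))) =
        μ (Metric.closedBall (0:ℚ_[p]) ((p:ℝ)^(-(j:ℤ)))) :=
    fun i _ => measure_closedBall_translate p μ _ _
  rw [Finset.sum_congr rfl this, Finset.sum_const, Finset.card_range, nsmul_eq_mul]
  congr 1
  push_cast
  ring

lemma measure_closedBall_le {r : ℝ} (h0 : 0 < r) (h1 : r ≤ 1) (z : ℚ_[p]) :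
    μ (Metric.closedBall z r) ≤
      ENNReal.ofReal r * μ (Metric.closedBall (0:ℚ_[p]) 1) := by
  have hp1 : 1 < (p : ℝ) := by exact_mod_cast hp.1.one_lt
  have hp0 : (0:ℝ) < p := by linarith
  have hex : ∃ j : ℕ, (p:ℝ)^(-(j:ℤ)) ≤ r := by
    obtain ⟨N, hN⟩ := exists_pow_lt_of_lt_one h0 (inv_lt_one_of_one_lt₀ hp1)
    exact ⟨N, by rw [zpow_neg, zpow_natCast, ← inv_pow]; exact hN.le⟩
  classical
  set j := Nat.find hex with hjdef
  have hj : (p:ℝ)^(-(j:ℤ)) ≤ r := Nat.find_spec hex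
  have hsub : Metric.closedBall z r ⊆ Metric.closedBall z ((p:ℝ)^(-(j:ℤ))) := by
    rcases Nat.eq_zero_or_pos j with hj0 | hjpos
    · rw [hj0]
      simpa using Metric.closedBall_subset_closedBall h1
    · have hmin : ¬ ((p:ℝ)^(-((j-1 : ℕ):ℤ)) ≤ r) := Nat.find_min hex (by omega)
      push_neg at hmin
      intro w hw
      rw [Metric.mem_closedBall, dist_eq_norm] at hw ⊢
      rcases eq_or_ne w z with rfl | hwz
      · rw [sub_self, norm_zero]
        positivity
      · have hsub0 : w - z ≠ 0 := sub_ne_zero.mpr hwz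
        rw [Padic.norm_eq_zpow_neg_valuation hsub0] at hw ⊢
        have hlt : (p:ℝ)^(-(w - z).valuation) < (p:ℝ)^(-((j-1 : ℕ):ℤ)) :=
          lt_of_le_of_lt hw hmin
        have hexplt : -(w - z).valuation < -((j-1 : ℕ):ℤ) :=
          (zpow_lt_zpow_iff_right₀ hp1).mp hlt
        apply zpow_le_zpow_right₀ hp1.le
        omega
  calc μ (Metric.closedBall z r) ≤ μ (Metric.closedBall z ((p:ℝ)^(-(j:ℤ)))) :=
        measure_mono hsub
    _ = μ (Metric.closedBall (0:ℚ_[p]) ((p:ℝ)^(-(j:ℤ)))) :=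
        measure_closedBall_translate p μ _ _
    _ = ENNReal.ofReal ((p:ℝ)^(-(j:ℤ))) * μ (Metric.closedBall (0:ℚ_[p]) 1) := by
        rw [← measure_small_ball p μ j, ← mul_assoc]
        have hpow : ENNReal.ofReal ((p:ℝ)^(-(j:ℤ))) * ((p:ℝ≥0∞) ^ (j:ℕ)) = 1 := by
          rw [zpow_neg, zpow_natCast]
          rw [ENNReal.ofReal_inv_of_pos (by positivity)]
          rw [ENNReal.ofReal_pow hp0.le]
          rw [ENNReal.ofReal_natCast]
          exact ENNReal.inv_mul_cancel (pow_ne_zero _ (Nat.cast_ne_zero.mpr hp.1.pos.ne'))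
            (ENNReal.pow_ne_top (ENNReal.natCast_ne_top p))
        rw [hpow, one_mul]
    _ ≤ ENNReal.ofReal r * μ (Metric.closedBall (0:ℚ_[p]) 1) := by
        gcongr

/-- The basic sets for the Borel–Cantelli argument. -/
def Ak (k : ℕ) (m : ℝ) (q : ℤ × ℤ) : Set ℚ_[p] :=
  {ξ | ‖ξ‖ ≤ (p:ℝ)^(k:ℕ) ∧ q.1 ≠ 0 ∧ q.2 ≠ 0 ∧
    ‖(q.2 : ℚ_[p]) * ξ - (q.1 : ℚ_[p])‖ ≤ (Real.sqrt |(q.1 : ℝ) * (q.2 : ℝ)|) ^ (-m)}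

lemma sqrt_rpow_eq {x y : ℤ} (m : ℝ) :
    (Real.sqrt |(x : ℝ) * (y : ℝ)|) ^ (-m) = |(x : ℝ) * (y : ℝ)| ^ (-(m/2)) := by
  rw [Real.sqrt_eq_rpow, ← Real.rpow_mul (abs_nonneg _)]
  congr 1
  ring

lemma Ak_dvd {k : ℕ} {m : ℝ} (hm : 2 < m) {x y : ℤ} (hx : x ≠ 0) (hy : y ≠ 0)
    (hne : (Ak p k m (x, y)).Nonempty) :
    (p:ℤ)^(padicValInt p y - k : ℕ) ∣ x := by
  have hp1 : 1 < (p : ℝ) := by exact_mod_cast hp.1.one_lt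
  have hp0 : (0:ℝ) < p := by linarith
  set v := padicValInt p y with hv
  rcases le_or_gt v k with hvk | hvk
  · have h0 : v - k = 0 := by omega
    rw [h0]
    simp
  · obtain ⟨ξ, hξb, -, -, hξle⟩ := hne
    set t := |(x:ℝ) * (y:ℝ)| with ht
    have ht1 : (1:ℝ) ≤ t := one_le_abs_mul hx hy
    have hyabs : ((p:ℤ)^(v:ℕ) : ℤ) ≤ |y| :=
      Int.le_of_dvd (abs_pos.mpr hy) ((dvd_abs _ _).mpr (padicValInt_dvd y))
    have hyabsR : ((p:ℝ)^(v:ℕ)) ≤ |(y:ℝ)| := by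
      rw [← Int.cast_abs]
      exact_mod_cast hyabs
    have hyt : |(y:ℝ)| ≤ t := by
      rw [ht, abs_mul]
      have h1 : (1:ℝ) ≤ |(x:ℝ)| := by
        rw [← Int.cast_abs]; exact_mod_cast Int.one_le_abs hx
      nlinarith [abs_nonneg (y:ℝ)]
    -- the approximation radius is at most p^(k-v)
    have hδ : (Real.sqrt |(x:ℝ) * (y:ℝ)|) ^ (-m) ≤ (p:ℝ)^(-(((v - k : ℕ)):ℤ)) := by
      rw [sqrt_rpow_eq, zpow_neg, zpow_natCast, Real.rpow_neg (by linarith : (0:ℝ) ≤ t)]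
      have hle2 : (p:ℝ)^((v - k : ℕ)) ≤ t ^ (m/2) := by
        calc (p:ℝ)^((v - k : ℕ)) ≤ (p:ℝ)^(v:ℕ) := by
              apply pow_le_pow_right₀ hp1.le
              omega
          _ ≤ |(y:ℝ)| := hyabsR
          _ ≤ t := hyt
          _ = t ^ (1:ℝ) := (Real.rpow_one t).symm
          _ ≤ t ^ (m/2) := Real.rpow_le_rpow_of_exponent_le ht1 (by linarith)
      exact inv_anti₀ (by positivity) hle2
    -- p-adic estimate for ‖x‖
    have hnormyx : ‖(y:ℚ_[p]) * ξ‖ ≤ (p:ℝ)^(-(((v - k : ℕ)):ℤ)) := by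
      rw [norm_mul, norm_intCast_eq p hy, ← hv]
      calc (p:ℝ)^(-(v:ℤ)) * ‖ξ‖ ≤ (p:ℝ)^(-(v:ℤ)) * (p:ℝ)^(k:ℕ) := by
            apply mul_le_mul_of_nonneg_left hξb (by positivity)
        _ = (p:ℝ)^(-(v:ℤ) + (k:ℤ)) := by
            rw [zpow_add₀ (by positivity : (p:ℝ) ≠ 0), zpow_natCast]
        _ ≤ (p:ℝ)^(-(((v - k : ℕ)):ℤ)) := by
            apply zpow_le_zpow_right₀ hp1.le
            omega
    have hxle : ‖(x:ℚ_[p])‖ ≤ (p:ℝ)^(-(((v - k : ℕ)):ℤ)) := by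
      have heq : (x:ℚ_[p]) = (y:ℚ_[p]) * ξ - ((y:ℚ_[p]) * ξ - (x:ℚ_[p])) := by ring
      rw [heq, sub_eq_add_neg]
      refine (Padic.nonarchimedean _ _).trans ?_
      rw [norm_neg]
      exact max_le hnormyx (hξle.trans hδ)
    have := (Padic.norm_int_le_pow_iff_dvd (p := p) x (v - k)).mp hxle
    exact_mod_cast this

lemma measure_Ak_le [MeasurableSpace ℚ_[p]] [BorelSpace ℚ_[p]] (μ : Measure ℚ_[p])
    [μ.IsAddHaarMeasure] {k : ℕ} {m : ℝ} (hm : 2 < m) {x y : ℤ} (hx : x ≠ 0) (hy : y ≠ 0) :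
    μ (Ak p k m (x, y)) ≤
      ENNReal.ofReal ((p:ℝ)^((padicValInt p y : ℕ)) * |(x:ℝ)*(y:ℝ)| ^ (-(m/2))) *
        μ (Metric.closedBall (0:ℚ_[p]) 1) := by
  have hp1 : 1 < (p : ℝ) := by exact_mod_cast hp.1.one_lt
  have hp0 : (0:ℝ) < p := by linarith
  set v := padicValInt p y with hv
  set t := |(x:ℝ) * (y:ℝ)| with ht
  have ht1 : (1:ℝ) ≤ t := one_le_abs_mul hx hy
  set r := (p:ℝ)^(v:ℕ) * t ^ (-(m/2)) with hr
  have h0r : 0 < r := by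
    rw [hr]
    have : (0:ℝ) < t ^ (-(m/2)) := Real.rpow_pos_of_pos (by linarith) _
    positivity
  have hyabs : ((p:ℤ)^(v:ℕ) : ℤ) ≤ |y| :=
    Int.le_of_dvd (abs_pos.mpr hy) ((dvd_abs _ _).mpr (padicValInt_dvd y))
  have hyabsR : ((p:ℝ)^(v:ℕ)) ≤ |(y:ℝ)| := by
    rw [← Int.cast_abs]
    exact_mod_cast hyabs
  have hyt : |(y:ℝ)| ≤ t := by
    rw [ht, abs_mul]
    have h1 : (1:ℝ) ≤ |(x:ℝ)| := by
      rw [← Int.cast_abs]; exact_mod_cast Int.one_le_abs hx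
    nlinarith [abs_nonneg (y:ℝ)]
  have h1r : r ≤ 1 := by
    calc r ≤ t * t ^ (-(m/2)) := by
          rw [hr]
          exact mul_le_mul_of_nonneg_right (hyabsR.trans hyt)
            (Real.rpow_nonneg (by linarith) _)
      _ = t ^ ((1:ℝ) + (-(m/2))) := by
          rw [Real.rpow_add (by linarith : (0:ℝ) < t), Real.rpow_one]
      _ ≤ 1 := Real.rpow_le_one_of_one_le_of_nonpos ht1 (by linarith)
  have hy' : (y:ℚ_[p]) ≠ 0 := by exact_mod_cast hy
  have hsub : Ak p k m (x,y) ⊆ Metric.closedBall ((x:ℚ_[p])/(y:ℚ_[p])) r := by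
    rintro ξ ⟨-, -, -, hle⟩
    rw [Metric.mem_closedBall, dist_eq_norm]
    have heq : ξ - (x:ℚ_[p])/(y:ℚ_[p]) = ((y:ℚ_[p]) * ξ - (x:ℚ_[p])) / (y:ℚ_[p]) := by
      field_simp
    rw [heq, norm_div, norm_intCast_eq p hy, ← hv]
    rw [div_le_iff₀ (by positivity)]
    rw [sqrt_rpow_eq] at hle
    calc ‖(y:ℚ_[p]) * ξ - (x:ℚ_[p])‖ ≤ t ^ (-(m/2)) := hle
      _ = r * (p:ℝ)^(-(v:ℤ)) := by
          rw [hr, zpow_neg, zpow_natCast]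
          field_simp
  calc μ (Ak p k m (x,y)) ≤ μ (Metric.closedBall ((x:ℚ_[p])/(y:ℚ_[p])) r) := measure_mono hsub
    _ ≤ ENNReal.ofReal r * μ (Metric.closedBall (0:ℚ_[p]) 1) :=
        measure_closedBall_le p μ h0r h1r _
    _ = _ := by rw [hr]

lemma summable_aux {s : ℝ} (hs : 1 < s) : Summable (fun a : ℤ => |(a:ℝ)| ^ (-s)) := by
  apply Summable.of_nat_of_neg
  · have he : (fun n : ℕ => |((n:ℤ):ℝ)| ^ (-s)) = fun n : ℕ => (n:ℝ) ^ (-s) := by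
      funext n
      congr 1
      push_cast
      exact abs_of_nonneg (Nat.cast_nonneg n)
    rw [he]
    exact Real.summable_nat_rpow.mpr (by linarith)
  · have he : (fun n : ℕ => |((↑(-(n:ℤ)) : ℝ))| ^ (-s)) = fun n : ℕ => (n:ℝ) ^ (-s) := by
      funext n
      congr 1
      push_cast
      rw [abs_neg]
      exact abs_of_nonneg (Nat.cast_nonneg n)
    rw [he]
    exact Real.summable_nat_rpow.mpr (by linarith)

lemma tsum_measure_Ak [MeasurableSpace ℚ_[p]] [BorelSpace ℚ_[p]] (μ : Measure ℚ_[p])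
    [μ.IsAddHaarMeasure] {k : ℕ} {m : ℝ} (hm : 2 < m) :
    ∑' q : ℤ × ℤ, μ (Ak p k m q) ≠ ⊤ := by
  have hp1 : 1 < (p : ℝ) := by exact_mod_cast hp.1.one_lt
  have hp0 : (0:ℝ) < p := by linarith
  have hpz : (p:ℤ) ≠ 0 := by exact_mod_cast hp.1.ne_zero
  set c := μ (Metric.closedBall (0:ℚ_[p]) 1) with hc
  have hcfin : c ≠ ⊤ := (isCompact_closedBall (0:ℚ_[p]) 1).measure_lt_top.ne
  set s : ℝ := m/2 with hs
  have hs1 : 1 < s := by rw [hs]; linarith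
  have hnon : ∀ a : ℤ, 0 ≤ |(a:ℝ)| ^ (-s) := fun a => Real.rpow_nonneg (abs_nonneg _) _
  have hsum : Summable (fun q : ℤ × ℤ => |(q.1:ℝ)| ^ (-s) * |(q.2:ℝ)| ^ (-s)) :=
    (summable_aux hs1).mul_of_nonneg (summable_aux hs1) (fun a => hnon a) (fun a => hnon a)
  set C := ENNReal.ofReal ((p:ℝ)^(k:ℕ)) * c with hC
  have hCtop : C * ENNReal.ofReal
      (∑' q : ℤ × ℤ, |(q.1:ℝ)| ^ (-s) * |(q.2:ℝ)| ^ (-s)) ≠ ⊤ :=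
    ENNReal.mul_ne_top (ENNReal.mul_ne_top ENNReal.ofReal_ne_top hcfin) ENNReal.ofReal_ne_top
  set i : ℤ × ℤ → ℤ × ℤ := fun u => ((p:ℤ)^((padicValInt p u.2 - k : ℕ)) * u.1, u.2) with hi
  have hinj : Function.Injective i := by
    rintro ⟨a, b⟩ ⟨a', b'⟩ hab
    simp only [hi, Prod.mk.injEq] at hab
    obtain ⟨h1, h2⟩ := hab
    subst h2
    have := mul_left_cancel₀ (pow_ne_zero ((padicValInt p b - k : ℕ)) hpz) h1
    simp [this]
  have hsupp : Function.support (fun q => μ (Ak p k m q)) ⊆ Set.range i := by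
    rintro ⟨x, y⟩ hq
    have hne : (Ak p k m (x, y)).Nonempty := by
      rw [Set.nonempty_iff_ne_empty]
      intro he
      apply hq
      simp only [he, measure_empty]
    obtain ⟨ξ, hξ⟩ := hne
    have hx : x ≠ 0 := hξ.2.1
    have hy : y ≠ 0 := hξ.2.2.1
    obtain ⟨u, hu⟩ := Ak_dvd p hm hx hy ⟨ξ, hξ⟩
    exact ⟨(u, y), by simp [hi, ← hu]⟩
  rw [← Function.Injective.tsum_eq hinj hsupp]
  have hbound : ∀ u : ℤ × ℤ, μ (Ak p k m (i u)) ≤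
      C * ENNReal.ofReal (|(u.1:ℝ)| ^ (-s) * |(u.2:ℝ)| ^ (-s)) := by
    rintro ⟨a, b⟩
    rcases eq_or_ne a 0 with rfl | ha
    · have hemp : Ak p k m (i (0, b)) = ∅ := by
        ext ξ
        simp [Ak, hi]
      rw [hemp]
      simp
    rcases eq_or_ne b 0 with rfl | hb
    · have hemp : Ak p k m (i (a, 0)) = ∅ := by
        ext ξ
        simp [Ak, hi]
      rw [hemp]
      simp
    · set v := padicValInt p b with hv
      set x := (p:ℤ)^((v - k : ℕ)) * a with hxdef
      have hx0 : x ≠ 0 := mul_ne_zero (pow_ne_zero _ hpz) ha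
      have hstep := measure_Ak_le p μ (k := k) hm hx0 hb
      have hieq : i (a, b) = (x, b) := rfl
      rw [hieq]
      refine hstep.trans ?_
      set P : ℝ := (p:ℝ)^((v - k : ℕ)) with hP
      have hPpos : 0 < P := by positivity
      have hP1 : 1 ≤ P := one_le_pow₀ hp1.le
      have habs : |(x:ℝ)*(b:ℝ)| = P * |(a:ℝ)*(b:ℝ)| := by
        rw [hxdef, hP]
        push_cast
        rw [mul_assoc, abs_mul]
        congr 1
        rw [abs_of_nonneg (by positivity)]
      have hsplit : |(a:ℝ)*(b:ℝ)| ^ (-(m/2)) = |(a:ℝ)| ^ (-s) * |(b:ℝ)| ^ (-s) := by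
        rw [abs_mul, Real.mul_rpow (abs_nonneg _) (abs_nonneg _), hs]
      have hPP : P * P ^ (-(m/2)) = P ^ (1 - m/2) := by
        rw [show (1 - m/2) = 1 + (-(m/2)) by ring, Real.rpow_add hPpos, Real.rpow_one]
      have hvk : (p:ℝ)^(v:ℕ) ≤ (p:ℝ)^(k:ℕ) * P := by
        rw [hP, ← pow_add]
        apply pow_le_pow_right₀ hp1.le
        omega
      have hreal : (p:ℝ)^(v:ℕ) * |(x:ℝ)*(b:ℝ)| ^ (-(m/2)) ≤
          (p:ℝ)^(k:ℕ) * (|(a:ℝ)| ^ (-s) * |(b:ℝ)| ^ (-s)) := by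
        have hrn : (0:ℝ) ≤ |(a:ℝ)| ^ (-s) * |(b:ℝ)| ^ (-s) :=
          mul_nonneg (hnon a) (hnon b)
        calc (p:ℝ)^(v:ℕ) * |(x:ℝ)*(b:ℝ)| ^ (-(m/2))
            = (p:ℝ)^(v:ℕ) * (P ^ (-(m/2)) * (|(a:ℝ)| ^ (-s) * |(b:ℝ)| ^ (-s))) := by
              rw [habs, Real.mul_rpow hPpos.le (abs_nonneg _), hsplit]
          _ ≤ ((p:ℝ)^(k:ℕ) * P) * (P ^ (-(m/2)) * (|(a:ℝ)| ^ (-s) * |(b:ℝ)| ^ (-s))) := by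
              apply mul_le_mul_of_nonneg_right hvk
              exact mul_nonneg (Real.rpow_nonneg hPpos.le _) hrn
          _ = ((p:ℝ)^(k:ℕ) * (P * P ^ (-(m/2)))) * (|(a:ℝ)| ^ (-s) * |(b:ℝ)| ^ (-s)) := by
              ring
          _ ≤ ((p:ℝ)^(k:ℕ) * 1) * (|(a:ℝ)| ^ (-s) * |(b:ℝ)| ^ (-s)) := by
              apply mul_le_mul_of_nonneg_right _ hrn
              apply mul_le_mul_of_nonneg_left _ (by positivity)
              rw [hPP]
              exact Real.rpow_le_one_of_one_le_of_nonpos hP1 (by linarith)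
          _ = (p:ℝ)^(k:ℕ) * (|(a:ℝ)| ^ (-s) * |(b:ℝ)| ^ (-s)) := by ring
      calc ENNReal.ofReal ((p:ℝ)^((padicValInt p b : ℕ)) * |(x:ℝ)*(b:ℝ)| ^ (-(m/2))) * c
          ≤ ENNReal.ofReal ((p:ℝ)^(k:ℕ) * (|(a:ℝ)| ^ (-s) * |(b:ℝ)| ^ (-s))) * c := by
            gcongr
        _ = C * ENNReal.ofReal (|(a:ℝ)| ^ (-s) * |(b:ℝ)| ^ (-s)) := by
            rw [hC, ENNReal.ofReal_mul (by positivity)]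
            ring
  refine ne_top_of_le_ne_top hCtop ?_
  calc ∑' u : ℤ × ℤ, μ (Ak p k m (i u))
      ≤ ∑' u : ℤ × ℤ, C * ENNReal.ofReal (|(u.1:ℝ)| ^ (-s) * |(u.2:ℝ)| ^ (-s)) :=
        ENNReal.tsum_le_tsum hbound
    _ = C * ∑' u : ℤ × ℤ, ENNReal.ofReal (|(u.1:ℝ)| ^ (-s) * |(u.2:ℝ)| ^ (-s)) :=
        ENNReal.tsum_mul_left
    _ = C * ENNReal.ofReal (∑' q : ℤ × ℤ, |(q.1:ℝ)| ^ (-s) * |(q.2:ℝ)| ^ (-s)) := by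
        rw [ENNReal.ofReal_tsum_of_nonneg (fun q => mul_nonneg (hnon _) (hnon _)) hsum]

lemma measure_ball_solSet_zero [MeasurableSpace ℚ_[p]] [BorelSpace ℚ_[p]] (μ : Measure ℚ_[p])
    [μ.IsAddHaarMeasure] (k : ℕ) {m : ℝ} (hm : 2 < m) :
    μ {ξ : ℚ_[p] | ‖ξ‖ ≤ (p:ℝ)^(k:ℕ) ∧ (solSet p m ξ).Infinite} = 0 := by
  have hsub : {ξ : ℚ_[p] | ‖ξ‖ ≤ (p:ℝ)^(k:ℕ) ∧ (solSet p m ξ).Infinite} ⊆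
      limsup (Ak p k m) cofinite := by
    rintro ξ ⟨hξb, hinf⟩
    rw [Filter.cofinite.limsup_set_eq]
    refine hinf.mono ?_
    intro q hq
    exact ⟨hξb, hq.1, hq.2.1, hq.2.2.2⟩
  exact measure_mono_null hsub (measure_limsup_cofinite_eq_zero (tsum_measure_Ak p μ hm))

lemma nat_le_pow (k : ℕ) : (k:ℝ) ≤ (p:ℝ)^(k:ℕ) := by
  calc (k:ℝ) ≤ ((2^k : ℕ) : ℝ) := by exact_mod_cast (Nat.lt_two_pow_self (n := k)).le
    _ ≤ ((p^k : ℕ) : ℝ) := by exact_mod_cast Nat.pow_le_pow_left hp.1.two_le k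
    _ = (p:ℝ)^(k:ℕ) := by push_cast; ring

end MeasureSide

end AuxPadic

/-- With respect to any additive Haar measure on `ℚ_p`, almost every `ξ` is irrational and
satisfies `μ×(ξ) = 2`: the set of `ξ` which are rational or have `μ×(ξ) ≠ 2` is null. -/
theorem statement2 (p : ℕ) [Fact p.Prime] [MeasurableSpace ℚ_[p]] [BorelSpace ℚ_[p]]
    (μ : Measure ℚ_[p]) [μ.IsAddHaarMeasure] :
    μ {ξ : ℚ_[p] | ¬ PadicIrrational p ξ ∨ muTimesExp p ξ ≠ 2} = 0 := by
  have hcover : {ξ : ℚ_[p] | ¬ PadicIrrational p ξ ∨ muTimesExp p ξ ≠ 2} ⊆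
      (Set.range ((↑) : ℚ → ℚ_[p])) ∪
        ⋃ (k : ℕ) (j : ℕ), {ξ : ℚ_[p] | ‖ξ‖ ≤ (p:ℝ)^(k:ℕ) ∧
          (AuxPadic.solSet p (2 + 1/((j:ℝ)+1)) ξ).Infinite} := by
    intro ξ hξ
    rcases Classical.em (PadicIrrational p ξ) with hirr | hrat
    · right
      have hne : muTimesExp p ξ ≠ 2 := (Set.mem_setOf_eq ▸ hξ).resolve_left (not_not_intro hirr)
      have hgt : 2 < muTimesExp p ξ :=
        lt_of_le_of_ne (AuxPadic.two_le_muTimesExp p hirr) (Ne.symm hne)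
      rw [AuxPadic.muTimesExp_eq] at hgt
      obtain ⟨a, ha, hagt⟩ := lt_sSup_iff.mp hgt
      obtain ⟨m, hmem, rfl⟩ := ha
      have hm2 : (2:ℝ) < m := by
        by_contra hle
        push_neg at hle
        have h2 : ENNReal.ofReal m ≤ 2 := by
          calc ENNReal.ofReal m ≤ ENNReal.ofReal 2 := ENNReal.ofReal_le_ofReal hle
            _ = 2 := by norm_num
        exact absurd hagt (not_lt.mpr h2)
      obtain ⟨j, hj⟩ := exists_nat_one_div_lt (by linarith : (0:ℝ) < m - 2)
      obtain ⟨k, hk⟩ := exists_nat_gt ‖ξ‖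
      have hkb : ‖ξ‖ ≤ (p:ℝ)^(k:ℕ) := hk.le.trans (AuxPadic.nat_le_pow p k)
      refine Set.mem_iUnion.mpr ⟨k, Set.mem_iUnion.mpr ⟨j, hkb, ?_⟩⟩
      exact hmem.mono (AuxPadic.solSet_antitone p (by linarith) ξ)
    · left
      rw [PadicIrrational] at hrat
      push_neg at hrat
      obtain ⟨q, hq⟩ := hrat
      exact ⟨q, hq⟩
  refine measure_mono_null hcover (measure_union_null ?_ ?_)
  · exact Set.Countable.measure_zero (Set.countable_range _) μ
  · refine measure_iUnion_null fun k => measure_iUnion_null fun j => ?_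
    refine AuxPadic.measure_ball_solSet_zero p μ k ?_
    have : (0:ℝ) < 1/((j:ℝ)+1) := by positivity
    linarith
end

section
/- The p-adic number ξ∞ = Σ_{j=1}^∞ p^{j!} (the series converges in ℚ_p) satisfies μ̂×(ξ∞) = 3. In particular, the value 3 belongs to the spectrum of the exponent μ̂×. -/
open Filter MeasureTheory
open scoped ENNReal

set_option linter.unusedSectionVars false

namespace S5
open Finset

variable (p : ℕ) [hp : Fact p.Prime]

def S (k : ℕ) : ℕ := ∑ j ∈ Finset.range k, p ^ (Nat.factorial (j+1))

noncomputable def xi : ℚ_[p] := ∑' j : ℕ, (p : ℚ_[p]) ^ (Nat.factorial (j+1))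

lemma hp2 : 2 ≤ p := hp.out.two_le

lemma hq1 : (1:ℝ) < p := by exact_mod_cast hp.out.one_lt

lemma hq0 : (0:ℝ) < p := lt_trans one_pos (hq1 p)

lemma summable_f : Summable (fun j : ℕ => (p:ℚ_[p]) ^ (Nat.factorial (j+1))) := by
  apply Summable.of_norm_bounded (g := fun j => (1/2:ℝ)^j) summable_geometric_two
  intro j
  rw [Padic.norm_p_pow]
  have h1 : ((p:ℝ) ^ (Nat.factorial (j+1)))⁻¹ ≤ ((2:ℝ)^j)⁻¹ := by
    apply inv_anti₀ (by positivity)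
    calc ((2:ℝ)^j) ≤ (2:ℝ) ^ (Nat.factorial (j+1)) := by
          apply pow_le_pow_right₀ one_le_two
          exact le_trans (Nat.le_succ j) (Nat.self_le_factorial _)
      _ ≤ (p:ℝ) ^ (Nat.factorial (j+1)) := by
          apply pow_le_pow_left₀ (by norm_num)
          exact_mod_cast hp2 p
  calc (p:ℝ) ^ (-(Nat.factorial (j+1) :ℤ)) = ((p:ℝ) ^ (Nat.factorial (j+1)))⁻¹ := by
        rw [zpow_neg, zpow_natCast]
    _ ≤ ((2:ℝ)^j)⁻¹ := h1
    _ = (1/2:ℝ)^j := by rw [one_div, inv_pow]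

lemma tail_norm (k : ℕ) : ‖xi p - (S p k : ℚ_[p])‖ ≤ (p:ℝ) ^ (-(Nat.factorial (k+1) : ℤ)) := by
  have hs := summable_f p
  have h1 := hs.sum_add_tsum_nat_add k
  have h2 : xi p - (S p k : ℚ_[p]) = ∑' j : ℕ, (p:ℚ_[p]) ^ (Nat.factorial (j+k+1)) := by
    have hc : ((S p k : ℕ) : ℚ_[p]) = ∑ j ∈ Finset.range k, (p:ℚ_[p]) ^ (Nat.factorial (j+1)) := by
      rw [S]; push_cast; rfl
    rw [xi, hc, ← h1]
    simp only [add_sub_cancel_left]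
  rw [h2]
  apply IsUltrametricDist.norm_tsum_le_of_forall_le_of_nonneg (by positivity)
  intro j
  rw [Padic.norm_p_pow]
  apply zpow_le_zpow_right₀ (le_of_lt (hq1 p))
  simp only [neg_le_neg_iff]
  exact_mod_cast Nat.factorial_le (by omega)


lemma S_succ (k : ℕ) : S p (k+1) = S p k + p ^ Nat.factorial (k+1) :=
  Finset.sum_range_succ _ k

lemma le_S (k : ℕ) (hk : 1 ≤ k) : p ^ Nat.factorial k ≤ S p k := by
  have h : k - 1 ∈ Finset.range k := by simp; omega
  have := Finset.single_le_sum (f := fun j => p ^ (Nat.factorial (j+1)))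
    (fun i _ => Nat.zero_le _) h
  have he : k - 1 + 1 = k := by omega
  simpa [he, S] using this

lemma S_pos (k : ℕ) (hk : 1 ≤ k) : 0 < S p k :=
  lt_of_lt_of_le (pow_pos hp.out.pos _) (le_S p k hk)

lemma S_lt (k : ℕ) (hk : 1 ≤ k) : S p k < 2 * p ^ Nat.factorial k := by
  induction k with
  | zero => omega
  | succ n ih =>
    rcases Nat.eq_zero_or_pos n with h0 | h1
    · subst h0
      have h5 : S p 1 = p := by rw [S, Finset.sum_range_one]; norm_num
      have h6 : Nat.factorial 1 = 1 := rfl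
      rw [h5, h6, pow_one]
      have := hp.out.pos; omega
    · have h2 : 2 * p ^ Nat.factorial n ≤ p ^ Nat.factorial (n+1) := by
        have : Nat.factorial n + 1 ≤ Nat.factorial (n+1) := by
          have h3 : Nat.factorial (n+1) = (n+1) * Nat.factorial n := rfl
          have h4 : 1 ≤ Nat.factorial n := Nat.one_le_iff_ne_zero.mpr (Nat.factorial_ne_zero n)
          nlinarith
        calc 2 * p ^ Nat.factorial n ≤ p * p ^ Nat.factorial n := by
              have := hp2 p; exact Nat.mul_le_mul_right _ this
          _ = p ^ (Nat.factorial n + 1) := by ring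
          _ ≤ p ^ Nat.factorial (n+1) := Nat.pow_le_pow_right hp.out.pos this
      have := ih h1
      rw [S_succ]
      omega

lemma key_dvd (x y : ℤ) (k n : ℕ) (hn : n ≤ Nat.factorial (k+1))
    (h : ‖(y:ℚ_[p]) * xi p - (x:ℚ_[p])‖ ≤ (p:ℝ)^(-(n:ℤ))) :
    ((p:ℤ)^n) ∣ (y * (S p k : ℤ) - x) := by
  rw [← Padic.norm_int_le_pow_iff_dvd]
  have heq : ((y * (S p k : ℤ) - x : ℤ) : ℚ_[p])
      = (↑y * xi p - ↑x) - ↑y * (xi p - (S p k : ℚ_[p])) := by push_cast; ring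
  rw [heq]
  have h2 : ‖(y:ℚ_[p]) * (xi p - (S p k : ℚ_[p]))‖ ≤ (p:ℝ)^(-(n:ℤ)) := by
    rw [norm_mul]
    calc ‖(y:ℚ_[p])‖ * ‖xi p - (S p k : ℚ_[p])‖ ≤ 1 * ((p:ℝ) ^ (-(Nat.factorial (k+1) : ℤ))) := by
          apply mul_le_mul (Padic.norm_int_le_one y) (tail_norm p k) (norm_nonneg _) zero_le_one
      _ = (p:ℝ) ^ (-(Nat.factorial (k+1) : ℤ)) := one_mul _
      _ ≤ (p:ℝ)^(-(n:ℤ)) := by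
          apply zpow_le_zpow_right₀ (by exact_mod_cast hp.out.one_le)
          omega
  calc ‖(↑y * xi p - ↑x) - ↑y * (xi p - (S p k : ℚ_[p]))‖
      ≤ max ‖(↑y * xi p - ↑x : ℚ_[p])‖ ‖(↑y * (xi p - (S p k : ℚ_[p])) : ℚ_[p])‖ := by
        rw [sub_eq_add_neg]
        refine le_trans (IsUltrametricDist.norm_add_le_max _ _) ?_
        rw [norm_neg]
      _ ≤ (p:ℝ)^(-(n:ℤ)) := max_le h h2

lemma cast_pow_eq_rpow (n : ℕ) : ((p ^ n : ℕ) : ℝ) = (p:ℝ) ^ (n:ℝ) := by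
  push_cast
  exact (Real.rpow_natCast _ n).symm

lemma nat_lt_pow (n e : ℕ) (h : n ≤ e) : n < p ^ e :=
  lt_of_lt_of_le (Nat.lt_two_pow_self (n := n))
    (le_trans (Nat.pow_le_pow_right (by norm_num) h) (Nat.pow_le_pow_left (hp2 p) e))

lemma err_bound (t k : ℕ) :
    ‖((((p:ℤ)^t : ℤ)) : ℚ_[p]) * xi p - (((p:ℤ)^t * (S p k : ℤ) : ℤ) : ℚ_[p])‖
      ≤ (p:ℝ) ^ (-((t:ℝ) + (Nat.factorial (k+1) : ℝ))) := by
  have heq : ((((p:ℤ)^t : ℤ)) : ℚ_[p]) * xi p - (((p:ℤ)^t * (S p k : ℤ) : ℤ) : ℚ_[p])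
      = (p:ℚ_[p])^t * (xi p - (S p k : ℚ_[p])) := by push_cast; ring
  rw [heq, norm_mul, Padic.norm_p_pow]
  have h2 := tail_norm p k
  calc (p:ℝ) ^ (-(t:ℤ)) * ‖xi p - (S p k : ℚ_[p])‖
      ≤ (p:ℝ) ^ (-(t:ℤ)) * (p:ℝ) ^ (-(Nat.factorial (k+1) : ℤ)) := by
        apply mul_le_mul_of_nonneg_left h2 (le_of_lt (zpow_pos (hq0 p) _))
    _ = (p:ℝ) ^ (-(t:ℤ) + -(Nat.factorial (k+1) : ℤ)) := by
        rw [← zpow_add₀ (ne_of_gt (hq0 p))]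
    _ = (p:ℝ) ^ (-((t:ℝ) + (Nat.factorial (k+1) : ℝ))) := by
        rw [← Real.rpow_intCast]
        push_cast
        ring_nf

lemma lower (m : ℝ) (hm2 : 2 ≤ m) (hm3 : m < 3) :
    ∀ᶠ X : ℝ in atTop, ∃ x y : ℤ,
      0 < Real.sqrt |(x:ℝ) * (y:ℝ)| ∧ Real.sqrt |(x:ℝ) * (y:ℝ)| ≤ X ∧
      ‖(y : ℚ_[p]) * xi p - (x : ℚ_[p])‖ ≤ X ^ (-m) := by
  have h3m : 0 < 3 - m := by linarith
  set K : ℕ := max 1 ⌈12 / (3 - m)⌉₊ with hK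
  have hK1 : 1 ≤ K := le_max_left _ _
  have hK12 : 12 ≤ (3 - m) * ((K:ℝ) + 1) := by
    have h1 : 12 / (3 - m) ≤ (K:ℝ) := le_trans (Nat.le_ceil _) (by exact_mod_cast le_max_right _ _)
    have h2 : 12 / (3-m) * (3-m) ≤ (K:ℝ) * (3-m) := mul_le_mul_of_nonneg_right h1 (le_of_lt h3m)
    rw [div_mul_cancel₀ _ (ne_of_gt h3m)] at h2
    nlinarith
  rw [eventually_atTop]
  refine ⟨((p ^ (Nat.factorial K + 1) : ℕ) : ℝ), ?_⟩
  intro X hX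
  have hX1 : (1:ℝ) ≤ X := by
    refine le_trans ?_ hX
    exact_mod_cast Nat.one_le_pow _ _ hp.out.pos
  have hX0 : (0:ℝ) < X := lt_of_lt_of_le one_pos hX1
  have hXsq : X ≤ X ^ 2 := by nlinarith
  set M : ℕ := ⌊X ^ 2⌋₊ with hM
  have hle_iff : ∀ n : ℕ, n ≤ M ↔ (n : ℝ) ≤ X ^ 2 := fun n => Nat.le_floor_iff (by positivity)
  have hlt_iff : ∀ n : ℕ, M < n ↔ X ^ 2 < (n : ℝ) := by
    intro n
    constructor
    · intro h
      by_contra hc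
      push_neg at hc
      exact absurd ((hle_iff n).mpr hc) (by omega)
    · intro h
      by_contra hc
      push_neg at hc
      have := (hle_iff n).mp hc
      linarith
  have hPK : p ^ (Nat.factorial K + 1) ≤ M := by
    rw [hle_iff]
    exact le_trans hX hXsq
  -- define k
  set P : ℕ → Prop := fun j => p ^ (Nat.factorial j + 1) ≤ M with hPdef
  have hdec : DecidablePred P := fun j => Nat.decLe _ _
  set k : ℕ := @Nat.findGreatest P hdec M with hkdef
  have hKM : K ≤ M := le_trans (le_of_lt (nat_lt_pow p K (Nat.factorial K + 1)
    (le_trans (Nat.self_le_factorial K) (Nat.le_succ _)))) hPK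
  have hKk : K ≤ k := Nat.le_findGreatest hKM hPK
  have hk1 : 1 ≤ k := le_trans hK1 hKk
  have hPk : P k := Nat.findGreatest_spec hKM hPK
  have hk1M : k + 1 ≤ M := by
    have : k + 1 ≤ p ^ (Nat.factorial k + 1) :=
      nat_lt_pow p k (Nat.factorial k + 1) (le_trans (Nat.self_le_factorial k) (Nat.le_succ _))
    exact le_trans this hPk
  have hnotPk : ¬ P (k+1) := Nat.findGreatest_is_greatest (by omega) hk1M
  -- define t
  set Q : ℕ → Prop := fun t => p ^ (2*t + Nat.factorial k + 1) ≤ M with hQdef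
  have hdecQ : DecidablePred Q := fun j => Nat.decLe _ _
  set t : ℕ := @Nat.findGreatest Q hdecQ M with htdef
  have hQ0 : Q 0 := by simpa [hQdef] using hPk
  have hQt : Q t := Nat.findGreatest_spec (Nat.zero_le M) hQ0
  have ht1M : t + 1 ≤ M := by
    have : t + 1 ≤ p ^ (2*t + Nat.factorial k + 1) :=
      nat_lt_pow p t (2*t + Nat.factorial k + 1) (by omega)
    exact le_trans this hQt
  have hnotQt : ¬ Q (t+1) := Nat.findGreatest_is_greatest (by omega) ht1M
  -- real abbreviations
  set q : ℝ := (p : ℝ) with hq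
  have hq1' : (1:ℝ) < q := hq1 p
  have hq0' : (0:ℝ) < q := hq0 p
  set a : ℝ := (Nat.factorial k : ℝ) with ha
  set b : ℝ := (Nat.factorial (k+1) : ℝ) with hb
  set τ : ℝ := (t : ℝ) with hτ
  have ha1 : 1 ≤ a := by
    have h0 : (1:ℕ) ≤ Nat.factorial k := Nat.one_le_iff_ne_zero.mpr (Nat.factorial_ne_zero k)
    rw [ha]; exact_mod_cast h0
  have hba : b = ((k:ℝ)+1) * a := by
    rw [ha, hb]
    exact_mod_cast congrArg (Nat.cast (R := ℝ)) (Nat.factorial_succ k)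
  have hτ0 : 0 ≤ τ := Nat.cast_nonneg t
  -- key real inequalities
  have hB : q ^ (2*τ + a + 1) ≤ X ^ 2 := by
    have := (hle_iff _).mp hQt
    rw [cast_pow_eq_rpow] at this
    convert this using 2
    push_cast; ring
  have hC : X ^ 2 < q ^ (2*τ + a + 3) := by
    have h1' : ¬ (p ^ (2*(t+1) + Nat.factorial k + 1) ≤ M) := hnotQt
    have h1 : M < p ^ (2*(t+1) + Nat.factorial k + 1) := Nat.lt_of_not_le h1'
    have := (hlt_iff _).mp h1
    rw [cast_pow_eq_rpow] at this
    convert this using 2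
    push_cast; ring
  have hD : X ^ 2 < q ^ (b + 1) := by
    have h1' : ¬ (p ^ (Nat.factorial (k+1) + 1) ≤ M) := hnotPk
    have h1 : M < p ^ (Nat.factorial (k+1) + 1) := Nat.lt_of_not_le h1'
    have := (hlt_iff _).mp h1
    rw [cast_pow_eq_rpow] at this
    convert this using 2
    push_cast; ring
  have hBD : 2*τ + a ≤ b := by
    have h1 : q ^ (2*τ + a + 1) < q ^ (b + 1) := lt_of_le_of_lt hB hD
    have h2 := (Real.rpow_lt_rpow_left_iff hq1').mp h1
    linarith
  have h12k : 12 ≤ (3 - m) * ((k:ℝ) + 1) := by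
    have : (K:ℝ) ≤ (k:ℝ) := by exact_mod_cast hKk
    nlinarith
  -- the solution
  have hS0 : (0:ℝ) < (S p k : ℝ) := by exact_mod_cast S_pos p k hk1
  have hSa : (S p k : ℝ) ≤ q ^ (a + 1) := by
    have h2 : 2 * p ^ Nat.factorial k ≤ p ^ (Nat.factorial k + 1) := by
      rw [pow_succ, mul_comm 2 (p ^ Nat.factorial k)]
      exact Nat.mul_le_mul_left _ (hp2 p)
    have h1 : S p k ≤ p ^ (Nat.factorial k + 1) := le_trans (le_of_lt (S_lt p k hk1)) h2
    calc (S p k : ℝ) ≤ ((p ^ (Nat.factorial k + 1) : ℕ) : ℝ) := by exact_mod_cast h1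
      _ = q ^ ((Nat.factorial k + 1 : ℕ) : ℝ) := cast_pow_eq_rpow p _
      _ = q ^ (a + 1) := by rw [ha]; norm_num
  have hqt : q ^ τ = q ^ t := Real.rpow_natCast q t
  have h2τ : q ^ (2*τ) = q ^ t * q ^ t := by
    rw [two_mul, Real.rpow_add hq0', hqt]
  have hval : ((((p:ℤ)^t * (S p k : ℤ) : ℤ)):ℝ) * (((p:ℤ)^t : ℤ):ℝ) = q ^ (2*τ) * (S p k : ℝ) := by
    rw [h2τ]
    push_cast
    ring
  have hvpos : (0:ℝ) < q ^ (2*τ) * (S p k : ℝ) :=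
    mul_pos (Real.rpow_pos_of_pos hq0' _) hS0
  have habs : |((((p:ℤ)^t * (S p k : ℤ) : ℤ)):ℝ) * (((p:ℤ)^t : ℤ):ℝ)| = q ^ (2*τ) * (S p k : ℝ) := by
    rw [hval, abs_of_pos hvpos]
  refine ⟨(p:ℤ)^t * (S p k : ℤ), (p:ℤ)^t, ?_, ?_, ?_⟩
  · rw [Real.sqrt_pos, habs]
    exact hvpos
  · have h1 : q ^ (2*τ) * (S p k : ℝ) ≤ X ^ 2 := by
      calc q ^ (2*τ) * (S p k : ℝ) ≤ q ^ (2*τ) * q ^ (a+1) :=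
            mul_le_mul_of_nonneg_left hSa (le_of_lt (Real.rpow_pos_of_pos hq0' _))
        _ = q ^ (2*τ + (a+1)) := (Real.rpow_add hq0' _ _).symm
        _ = q ^ (2*τ + a + 1) := by ring_nf
        _ ≤ X ^ 2 := hB
    rw [habs]
    calc Real.sqrt (q ^ (2*τ) * (S p k : ℝ)) ≤ Real.sqrt (X ^ 2) := Real.sqrt_le_sqrt h1
      _ = X := Real.sqrt_sq (le_of_lt hX0)
  · have herr := err_bound p t k
    have hXlt : X ≤ q ^ ((2*τ + a + 3)/2) := by
      have hsq : X ^ 2 ≤ (q ^ ((2*τ + a + 3)/2)) ^ 2 := by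
        have : (q ^ ((2*τ + a + 3)/2)) ^ 2 = q ^ (2*τ + a + 3) := by
          rw [sq, ← Real.rpow_add hq0']
          ring_nf
        rw [this]
        exact le_of_lt hC
      have h3 := Real.sqrt_le_sqrt hsq
      rwa [Real.sqrt_sq (le_of_lt hX0),
        Real.sqrt_sq (le_of_lt (Real.rpow_pos_of_pos hq0' _))] at h3
    have hexp : ((2*τ + a + 3)/2) * m ≤ τ + b := by
      have e1 : (m-1)*(2*τ) ≤ (m-1)*(b - a) :=
        mul_le_mul_of_nonneg_left (by linarith) (by linarith)
      have e2 : 12*a ≤ (3-m)*((k:ℝ)+1)*a :=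
        mul_le_mul_of_nonneg_right h12k (by linarith)
      have e3 : (3-m)*((k:ℝ)+1)*a = (3-m)*b := by rw [hba]; ring
      have e4 : 12*a ≤ (3-m)*b := by rw [← e3]; exact e2
      linarith only [e1, e4, ha1, hm3, hBD]
    have hXm : X ^ m ≤ q ^ (τ + b) := by
      calc X ^ m ≤ (q ^ ((2*τ + a + 3)/2)) ^ m :=
            Real.rpow_le_rpow (le_of_lt hX0) hXlt (by linarith)
        _ = q ^ (((2*τ + a + 3)/2) * m) := by
            rw [← Real.rpow_mul (le_of_lt hq0')]
        _ ≤ q ^ (τ + b) := by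
            apply Real.rpow_le_rpow_left_iff hq1' |>.mpr hexp
    have hfin : q ^ (-(τ + b)) ≤ X ^ (-m) := by
      rw [Real.rpow_neg (le_of_lt hX0), Real.rpow_neg (le_of_lt hq0')]
      exact inv_anti₀ (Real.rpow_pos_of_pos hX0 m) hXm
    exact le_trans herr hfin

lemma S_le_rpow (k : ℕ) (hk : 1 ≤ k) : (S p k : ℝ) ≤ (p:ℝ) ^ ((Nat.factorial k : ℝ) + 1) := by
  have h2 : 2 * p ^ Nat.factorial k ≤ p ^ (Nat.factorial k + 1) := by
    rw [pow_succ, mul_comm 2 (p ^ Nat.factorial k)]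
    exact Nat.mul_le_mul_left _ (hp2 p)
  have h1 : S p k ≤ p ^ (Nat.factorial k + 1) := le_trans (le_of_lt (S_lt p k hk)) h2
  calc (S p k : ℝ) ≤ ((p ^ (Nat.factorial k + 1) : ℕ) : ℝ) := by exact_mod_cast h1
    _ = (p:ℝ) ^ ((Nat.factorial k + 1 : ℕ) : ℝ) := cast_pow_eq_rpow p _
    _ = (p:ℝ) ^ ((Nat.factorial k : ℝ) + 1) := by norm_num

lemma rpow_le_S (k : ℕ) (hk : 1 ≤ k) : (p:ℝ) ^ ((Nat.factorial k : ℝ)) ≤ (S p k : ℝ) := by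
  calc (p:ℝ) ^ ((Nat.factorial k : ℝ)) = ((p ^ (Nat.factorial k) : ℕ) : ℝ) :=
        (cast_pow_eq_rpow p _).symm
    _ ≤ (S p k : ℝ) := by exact_mod_cast le_S p k hk

set_option maxHeartbeats 2000000 in
lemma upper (m : ℝ) (hm : 3 < m)
    (hA : ∀ᶠ X : ℝ in atTop, ∃ x y : ℤ,
      0 < Real.sqrt |(x:ℝ) * (y:ℝ)| ∧ Real.sqrt |(x:ℝ) * (y:ℝ)| ≤ X ∧
      ‖(y : ℚ_[p]) * xi p - (x : ℚ_[p])‖ ≤ X ^ (-m)) : False := by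
  obtain ⟨X₀, hX₀⟩ := eventually_atTop.mp hA
  set q : ℝ := (p : ℝ) with hqdef
  have hq1' : (1:ℝ) < q := hq1 p
  have hq0' : (0:ℝ) < q := hq0 p
  have hq2 : (2:ℝ) ≤ q := by rw [hqdef]; exact_mod_cast hp2 p
  set W : ℝ := max X₀ 1 with hW
  -- choose k
  obtain ⟨k, hk⟩ := exists_nat_ge (max (12*m) (max ((3*m+4)/(m-3) + 1) (4*(m-1)*W)))
  have hk12m : 12*m ≤ (k:ℝ) := le_trans (le_max_left _ _) hk
  have hkE3 : (3*m+4)/(m-3) + 1 ≤ (k:ℝ) := le_trans (le_trans (le_max_left _ _) (le_max_right _ _)) hk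
  have hkW : 4*(m-1)*W ≤ (k:ℝ) := le_trans (le_trans (le_max_right _ _) (le_max_right _ _)) hk
  have hm3 : (0:ℝ) < m - 3 := by linarith
  have hk1 : 1 ≤ k := by
    by_contra h
    push_neg at h
    interval_cases k
    · simp at hk12m; nlinarith
  set a : ℝ := (Nat.factorial k : ℝ) with ha
  set b : ℝ := (Nat.factorial (k+1) : ℝ) with hb
  have ha1 : 1 ≤ a := by
    have h0 : (1:ℕ) ≤ Nat.factorial k := Nat.one_le_iff_ne_zero.mpr (Nat.factorial_ne_zero k)
    rw [ha]; exact_mod_cast h0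
  have hka : (k:ℝ) ≤ a := by rw [ha]; exact_mod_cast Nat.self_le_factorial k
  have hba : b = ((k:ℝ)+1) * a := by
    rw [ha, hb]; exact_mod_cast congrArg (Nat.cast (R := ℝ)) (Nat.factorial_succ k)
  have hbk : (k:ℝ) + 1 ≤ b := by nlinarith
  set θ : ℝ := (b - a/2 + 4)/(m-1) with hθ
  have hm1 : (0:ℝ) < m - 1 := by linarith
  have hEdef : (m-1)*θ = b - a/2 + 4 := by
    rw [hθ, mul_comm]
    exact div_mul_cancel₀ _ (ne_of_gt hm1)
  have hθpos : 0 < θ := by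
    apply div_pos ?_ hm1
    nlinarith
  have hθb : b/(2*(m-1)) ≤ θ := by
    rw [hθ, div_le_div_iff₀ (by positivity) hm1]
    nlinarith
  -- conditions
  have hma : (0:ℝ) ≤ m*a := mul_nonneg (by linarith) (by linarith)
  have hE2 : b ≤ m*θ := by
    have h : m * θ = (m/(m-1)) * (b - a/2 + 4) := by rw [hθ]; ring
    rw [h, div_mul_eq_mul_div, le_div_iff₀ hm1]
    have e5 : (12*m)*a ≤ (k:ℝ)*a := mul_le_mul_of_nonneg_right hk12m (by linarith)
    have e5' : b = (k:ℝ)*a + a := by rw [hba]; ring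
    linarith only [e5, e5', hma, ha1, hm]
  have hb0 : (0:ℝ) ≤ b := by linarith
  have hkb0 : (0:ℝ) ≤ (k:ℝ)*b := mul_nonneg (by positivity) hb0
  have hE0 : m*θ ≤ ((k:ℝ)+2)*b := by
    have h : m * θ = (m/(m-1)) * (b - a/2 + 4) := by rw [hθ]; ring
    rw [h, div_mul_eq_mul_div, div_le_iff₀ hm1]
    have e6 : (((k:ℝ)+2)*b)*2 ≤ (((k:ℝ)+2)*b)*(m-1) :=
      mul_le_mul_of_nonneg_left (by linarith) (mul_nonneg (by positivity) hb0)
    have e7 : m*b ≤ (k:ℝ)*b := mul_le_mul_of_nonneg_right (by linarith) (by linarith)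
    linarith only [e6, e7, hbk, hma, hkb0, hm, hk12m]
  have hE1 : 5 < (m-2)*θ := by
    have h1 : 12*(m-1) ≤ b := by linarith [hbk, hk12m]
    have h2 : 6 ≤ θ := by
      rw [hθ, le_div_iff₀ hm1]
      nlinarith
    nlinarith
  have ha36 : 36 ≤ a := by linarith [hka, hk12m, hm]
  have hE3 : 2*θ + 2 < b - a := by
    have h1 : (3*m+4) ≤ (m-3)*((k:ℝ)+1) := by
      have h0 : (3*m+4)/(m-3) ≤ (k:ℝ)+1 := by linarith
      rw [div_le_iff₀ hm3] at h0
      linarith [h0]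
    have e1' : (3*m+4)*a ≤ (m-3)*b := by
      have e1 : (3*m+4)*a ≤ ((m-3)*((k:ℝ)+1))*a := mul_le_mul_of_nonneg_right h1 (by linarith)
      have e3 : ((m-3)*((k:ℝ)+1))*a = (m-3)*b := by rw [hba]; ring
      linarith
    have e2 : (0:ℝ) < (2*m+6)*(a-1) := mul_pos (by linarith) (by linarith)
    have h2 : 2*(b - a/2 + 4) < (b - a - 2)*(m-1) := by linarith only [e1', e2]
    have h3 : 2*θ < b - a - 2 := by
      rw [hθ, mul_div_assoc']
      rw [div_lt_iff₀ hm1]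
      linarith
    linarith
  -- set up X and get a solution
  set c : ℝ := m * θ with hc
  have hc0 : (0:ℝ) ≤ c := le_of_lt (mul_pos (by linarith) hθpos)
  set X : ℝ := q ^ θ with hX
  have hX0 : 0 < X := Real.rpow_pos_of_pos hq0' θ
  have hXW : X₀ ≤ X := by
    have hθW : 2*W ≤ θ := by
      have h1 : 4*(m-1)*W ≤ b := by linarith [hbk, hkW]
      have h2 : (4*(m-1)*W)/(2*(m-1)) ≤ b/(2*(m-1)) :=
        (div_le_div_iff_of_pos_right (by positivity)).mpr h1
      have h3 : (4*(m-1)*W)/(2*(m-1)) = 2*W := by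
        rw [div_eq_iff (by positivity)]; ring
      linarith only [hθb, h1, h2, h3]
    have hW1 : (1:ℝ) ≤ W := le_max_right _ _
    have h2θ : (2:ℝ)^θ ≤ X := by
      rw [hX]
      exact Real.rpow_le_rpow (by norm_num) hq2 (le_of_lt hθpos)
    have h3 : Real.log 2 * θ + 1 ≤ (2:ℝ)^θ := by
      rw [Real.rpow_def_of_pos (by norm_num)]
      exact Real.add_one_le_exp _
    have hlog : (1/2 : ℝ) ≤ Real.log 2 := by
      have := Real.log_two_gt_d9
      linarith
    have h6 : (1/2)*θ ≤ Real.log 2 * θ :=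
      mul_le_mul_of_nonneg_right hlog (le_of_lt hθpos)
    have h4 : θ/2 ≤ (2:ℝ)^θ := by linarith only [h3, h6]
    have h5 : W ≤ θ/2 := by linarith only [hθW]
    calc X₀ ≤ W := le_max_left _ _
      _ ≤ θ/2 := h5
      _ ≤ (2:ℝ)^θ := h4
      _ ≤ X := h2θ
  obtain ⟨x, y, hpos, hsqX, herr⟩ := hX₀ X hXW
  -- basics
  have hxyne : ((x:ℝ) * (y:ℝ)) ≠ 0 := by
    intro h
    rw [h, abs_zero, Real.sqrt_zero] at hpos
    exact lt_irrefl 0 hpos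
  have hxne : x ≠ 0 := by
    intro h; apply hxyne; rw [h]; push_cast; ring
  have hyne : y ≠ 0 := by
    intro h; apply hxyne; rw [h]; push_cast; ring
  have hx1 : (1:ℝ) ≤ |(x:ℝ)| := by
    have h1 : (1:ℤ) ≤ |x| := Int.one_le_abs (by omega)
    calc (1:ℝ) ≤ ((|x| : ℤ) : ℝ) := by exact_mod_cast h1
      _ = |(x:ℝ)| := by push_cast; rfl
  have hy1 : (1:ℝ) ≤ |(y:ℝ)| := by
    have h1 : (1:ℤ) ≤ |y| := Int.one_le_abs (by omega)
    calc (1:ℝ) ≤ ((|y| : ℤ) : ℝ) := by exact_mod_cast h1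
      _ = |(y:ℝ)| := by push_cast; rfl
  have hxy2 : |(x:ℝ)| * |(y:ℝ)| ≤ q^(2*θ) := by
    have h2 := Real.sq_sqrt (abs_nonneg ((x:ℝ)*(y:ℝ)))
    have hX2 : X^2 = q^(2*θ) := by
      rw [hX, ← Real.rpow_natCast (q^θ) 2, ← Real.rpow_mul (le_of_lt hq0')]
      norm_num [mul_comm]
    have h1 : |(x:ℝ)*(y:ℝ)| ≤ X^2 := by
      nlinarith [Real.sqrt_nonneg |(x:ℝ)*(y:ℝ)|, hsqX, h2, hX0]
    rw [abs_mul] at h1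
    linarith only [h1, hX2]
  -- exponent comparison helper
  have hcmp : ∀ E : ℝ, q^E ≤ |(x:ℝ)| * |(y:ℝ)| → E ≤ 2*θ := by
    intro E hE
    exact (Real.rpow_le_rpow_left_iff hq1').mp (le_trans hE hxy2)
  have hhalf : ∀ u : ℝ, q^(u-1) ≤ q^u / 2 := by
    intro u
    have h1 : q^u = q^(u-1) * q := by
      rw [← Real.rpow_add_one (ne_of_gt hq0')]
      ring_nf
    have h2 : q^(u-1) * 2 ≤ q^(u-1) * q :=
      mul_le_mul_of_nonneg_left hq2 (le_of_lt (Real.rpow_pos_of_pos hq0' _))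
    rw [h1]
    linarith
  -- divisibility facts
  set n₂ : ℕ := ⌊c⌋₊ with hn2
  have hcn₂ : c < (n₂:ℝ) + 1 := Nat.lt_floor_add_one c
  have hn₂c : ((n₂:ℕ):ℝ) ≤ c := Nat.floor_le hc0
  have herrq : ‖(y:ℚ_[p]) * xi p - (x:ℚ_[p])‖ ≤ q^(-c) := by
    refine le_trans herr (le_of_eq ?_)
    rw [hX, ← Real.rpow_mul (le_of_lt hq0'), hc]
    ring_nf
  have herr₂ : ‖(y:ℚ_[p]) * xi p - (x:ℚ_[p])‖ ≤ (p:ℝ)^(-(n₂:ℤ)) := by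
    refine le_trans herrq ?_
    rw [← Real.rpow_intCast (p:ℝ) (-(n₂:ℤ))]
    apply (Real.rpow_le_rpow_left_iff hq1').mpr
    push_cast
    linarith only [hn₂c]
  have herr₁ : ‖(y:ℚ_[p]) * xi p - (x:ℚ_[p])‖ ≤ (p:ℝ)^(-(Nat.factorial (k+1):ℤ)) := by
    refine le_trans herrq ?_
    rw [← Real.rpow_intCast (p:ℝ) (-(Nat.factorial (k+1):ℤ))]
    apply (Real.rpow_le_rpow_left_iff hq1').mpr
    push_cast
    rw [← hb]
    linarith only [hE2]
  have hfact2 : ((Nat.factorial (k+2) : ℕ) : ℝ) = ((k:ℝ)+2) * b := by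
    rw [hb]
    exact_mod_cast congrArg (Nat.cast (R := ℝ)) (Nat.factorial_succ (k+1))
  have hn₂le : n₂ ≤ Nat.factorial (k+2) := by
    have h1 : ((n₂:ℕ):ℝ) ≤ ((Nat.factorial (k+2) : ℕ) : ℝ) := by
      rw [hfact2]
      linarith only [hn₂c, hE0]
    exact_mod_cast h1
  have hdvd2 : ((p:ℤ)^n₂) ∣ (y * (S p (k+1) : ℤ) - x) := key_dvd p x y (k+1) n₂ hn₂le herr₂
  have hdvd1 : ((p:ℤ)^(Nat.factorial (k+1))) ∣ (y * (S p k : ℤ) - x) :=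
    key_dvd p x y k (Nat.factorial (k+1)) le_rfl herr₁
  -- S bounds (real)
  have hS1 : (S p (k+1) : ℝ) ≤ q^(b+1) := S_le_rpow p (k+1) (by omega)
  have hS2 : q^b ≤ (S p (k+1) : ℝ) := rpow_le_S p (k+1) (by omega)
  have hS3 : (S p k : ℝ) ≤ q^(a+1) := S_le_rpow p k hk1
  have hS4 : q^a ≤ (S p k : ℝ) := rpow_le_S p k hk1
  have hSnn : (0:ℝ) ≤ (S p k : ℝ) := Nat.cast_nonneg _
  have hSnn1 : (0:ℝ) ≤ (S p (k+1) : ℝ) := Nat.cast_nonneg _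
  -- case analysis
  rcases eq_or_ne (y * (S p (k+1) : ℤ) - x) 0 with hN | hN
  · -- N = 0 : x = y * S (k+1)
    have hxe : (x:ℝ) = (y:ℝ) * (S p (k+1) : ℝ) := by
      have h1 : y * (S p (k+1) : ℤ) = x := by omega
      exact_mod_cast h1.symm
    have h2 : q^b ≤ |(x:ℝ)| * |(y:ℝ)| := by
      rw [hxe, abs_mul, abs_of_nonneg hSnn1]
      calc q^b ≤ (S p (k+1) : ℝ) := hS2
        _ = 1 * (S p (k+1) : ℝ) * 1 := by ring
        _ ≤ |(y:ℝ)| * (S p (k+1) : ℝ) * |(y:ℝ)| := by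
            apply mul_le_mul (mul_le_mul hy1 le_rfl hSnn1 (by linarith)) hy1 zero_le_one
            positivity
        _ = |(y:ℝ)| * (S p (k+1) : ℝ) * |(y:ℝ)| := rfl
    have := hcmp b h2
    linarith only [this, hE3, ha1]
  · -- N ≠ 0
    have hNlb : q^(c-1) ≤ |((y * (S p (k+1) : ℤ) - x : ℤ) : ℝ)| := by
      have h1 : (p:ℤ)^n₂ ≤ |y * (S p (k+1) : ℤ) - x| :=
        Int.le_of_dvd (abs_pos.mpr hN) ((dvd_abs _ _).mpr hdvd2)
      have h2 : (((p:ℤ)^n₂ : ℤ):ℝ) = q^((n₂:ℕ):ℝ) := by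
        push_cast
        exact (Real.rpow_natCast _ n₂).symm
      calc q^(c-1) ≤ q^((n₂:ℕ):ℝ) := by
            apply (Real.rpow_le_rpow_left_iff hq1').mpr
            linarith only [hcn₂]
        _ = (((p:ℤ)^n₂ : ℤ):ℝ) := h2.symm
        _ ≤ |((y * (S p (k+1) : ℤ) - x : ℤ) : ℝ)| := by
            rw [← Int.cast_abs]
            exact_mod_cast h1
    have hNub : |((y * (S p (k+1) : ℤ) - x : ℤ) : ℝ)| ≤ |(y:ℝ)| * q^(b+1) + |(x:ℝ)| := by
      push_cast
      calc |(y:ℝ) * (S p (k+1) : ℝ) - (x:ℝ)| ≤ |(y:ℝ) * (S p (k+1) : ℝ)| + |(x:ℝ)| :=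
            abs_sub _ _
        _ = |(y:ℝ)| * (S p (k+1) : ℝ) + |(x:ℝ)| := by
            rw [abs_mul, abs_of_nonneg hSnn1]
        _ ≤ |(y:ℝ)| * q^(b+1) + |(x:ℝ)| := by
            have := mul_le_mul_of_nonneg_left hS1 (abs_nonneg (y:ℝ))
            linarith only [this]
    by_cases hcase1 : q^(c-1)/2 ≤ |(x:ℝ)|
    · have h2 : q^(c-2) ≤ |(x:ℝ)| * |(y:ℝ)| := by
        calc q^(c-2) = q^(c-1-1) := by ring_nf
          _ ≤ q^(c-1)/2 := hhalf _
          _ ≤ |(x:ℝ)| := hcase1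
          _ = |(x:ℝ)| * 1 := (mul_one _).symm
          _ ≤ |(x:ℝ)| * |(y:ℝ)| := mul_le_mul_of_nonneg_left hy1 (abs_nonneg _)
      have := hcmp (c-2) h2
      rw [hc] at this
      linarith only [this, hE1]
    · push_neg at hcase1
      have hylb : q^(c-b-3) ≤ |(y:ℝ)| := by
        have h1 : q^(c-2) ≤ |(y:ℝ)| * q^(b+1) := by
          have h0 : q^(c-1) - q^(c-1)/2 = q^(c-1)/2 := by ring
          have h2 : q^(c-1)/2 ≤ |(y:ℝ)| * q^(b+1) := by linarith only [hNlb, hNub, hcase1]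
          calc q^(c-2) = q^(c-1-1) := by ring_nf
            _ ≤ q^(c-1)/2 := hhalf _
            _ ≤ |(y:ℝ)| * q^(b+1) := h2
        have h3 : q^(c-2) / q^(b+1) = q^(c-b-3) := by
          rw [← Real.rpow_sub hq0']
          ring_nf
        rw [← h3]
        rw [div_le_iff₀ (Real.rpow_pos_of_pos hq0' _)]
        linarith only [h1]
      rcases eq_or_ne (y * (S p k : ℤ) - x) 0 with hN' | hN'
      · -- C1
        have hxe : (x:ℝ) = (y:ℝ) * (S p k : ℝ) := by
          have h1 : y * (S p k : ℤ) = x := by omega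
          exact_mod_cast h1.symm
        have h2 : q^(2*(c-b-3)+a) ≤ |(x:ℝ)| * |(y:ℝ)| := by
          rw [hxe, abs_mul, abs_of_nonneg hSnn]
          have e1 : q^(2*(c-b-3)+a) = (q^(c-b-3) * q^(c-b-3)) * q^a := by
            rw [← Real.rpow_add hq0', ← Real.rpow_add hq0']
            ring_nf
          rw [e1]
          have hy0 : (0:ℝ) ≤ q^(c-b-3) := le_of_lt (Real.rpow_pos_of_pos hq0' _)
          calc (q^(c-b-3) * q^(c-b-3)) * q^a
              ≤ (|(y:ℝ)| * |(y:ℝ)|) * (S p k : ℝ) := by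
                apply mul_le_mul (mul_le_mul hylb hylb hy0 (abs_nonneg _))
                  (le_trans hS4 le_rfl) (le_of_lt (Real.rpow_pos_of_pos hq0' _)) (by positivity)
            _ = |(y:ℝ)| * (S p k : ℝ) * |(y:ℝ)| := by ring
        have := hcmp _ h2
        rw [hc] at this
        linarith only [this, hEdef]
      · -- C2
        have hN'lb : q^b ≤ |((y * (S p k : ℤ) - x : ℤ) : ℝ)| := by
          have h1 : (p:ℤ)^(Nat.factorial (k+1)) ≤ |y * (S p k : ℤ) - x| :=
            Int.le_of_dvd (abs_pos.mpr hN') ((dvd_abs _ _).mpr hdvd1)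
          have h2 : (((p:ℤ)^(Nat.factorial (k+1)) : ℤ):ℝ) = q^b := by
            push_cast
            rw [hb]
            exact (Real.rpow_natCast _ _).symm
          calc q^b = (((p:ℤ)^(Nat.factorial (k+1)) : ℤ):ℝ) := h2.symm
            _ ≤ |((y * (S p k : ℤ) - x : ℤ) : ℝ)| := by
              rw [← Int.cast_abs]
              exact_mod_cast h1
        have hN'ub : |((y * (S p k : ℤ) - x : ℤ) : ℝ)| ≤ |(y:ℝ)| * q^(a+1) + |(x:ℝ)| := by
          push_cast
          calc |(y:ℝ) * (S p k : ℝ) - (x:ℝ)| ≤ |(y:ℝ) * (S p k : ℝ)| + |(x:ℝ)| := abs_sub _ _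
            _ = |(y:ℝ)| * (S p k : ℝ) + |(x:ℝ)| := by rw [abs_mul, abs_of_nonneg hSnn]
            _ ≤ |(y:ℝ)| * q^(a+1) + |(x:ℝ)| := by
                have := mul_le_mul_of_nonneg_left hS3 (abs_nonneg (y:ℝ))
                linarith only [this]
        by_cases hcase2 : q^b/2 ≤ |(x:ℝ)|
        · have h2 : q^(c-4) ≤ |(x:ℝ)| * |(y:ℝ)| := by
            have e1 : q^(c-4) = q^(b-1) * q^(c-b-3) := by
              rw [← Real.rpow_add hq0']
              ring_nf
            rw [e1]
            apply mul_le_mul (le_trans (hhalf b) hcase2) hylb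
              (le_of_lt (Real.rpow_pos_of_pos hq0' _)) (abs_nonneg _)
          have := hcmp _ h2
          rw [hc] at this
          linarith only [this, hE1]
        · push_neg at hcase2
          have hylb2 : q^(b-a-2) ≤ |(y:ℝ)| := by
            have h1 : q^(b-1) ≤ |(y:ℝ)| * q^(a+1) := by
              have h2 : q^b/2 ≤ |(y:ℝ)| * q^(a+1) := by linarith only [hN'lb, hN'ub, hcase2]
              linarith only [h2, hhalf b]
            have h3 : q^(b-1) / q^(a+1) = q^(b-a-2) := by
              rw [← Real.rpow_sub hq0']
              ring_nf
            rw [← h3, div_le_iff₀ (Real.rpow_pos_of_pos hq0' _)]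
            linarith only [h1]
          have h2 : q^(b-a-2) ≤ |(x:ℝ)| * |(y:ℝ)| := by
            calc q^(b-a-2) ≤ |(y:ℝ)| := hylb2
              _ = 1 * |(y:ℝ)| := (one_mul _).symm
              _ ≤ |(x:ℝ)| * |(y:ℝ)| := mul_le_mul_of_nonneg_right hx1 (abs_nonneg _)
          have := hcmp _ h2
          linarith only [this, hE3]

lemma approx_eq (x y : ℤ) (hrel : (y:ℚ_[p]) * xi p - (x:ℚ_[p]) = 0) (k : ℕ)
    (hk : 1 ≤ k) (hkC : 2*y.natAbs + x.natAbs + 1 ≤ k) : y * (S p k : ℤ) = x := by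
  have hdvd : ((p:ℤ)^(Nat.factorial (k+1))) ∣ (y * (S p k : ℤ) - x) := by
    apply key_dvd p x y k _ le_rfl
    rw [hrel, norm_zero]
    positivity
  have habs : |y * (S p k : ℤ) - x| < (p:ℤ)^(Nat.factorial (k+1)) := by
    set Y := y.natAbs with hY
    set Xn := x.natAbs with hXn
    have hnat : Y * S p k + Xn < p ^ Nat.factorial (k+1) := by
      have hSb := S_lt p k hk
      set C : ℕ := 2*Y + Xn + 1 with hC
      have h1 : Y * S p k + Xn < C * p ^ Nat.factorial k := by
        have hp1 : 1 ≤ p ^ Nat.factorial k := Nat.one_le_pow _ _ hp.out.pos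
        have h2 : Y * S p k ≤ Y * (2 * p ^ Nat.factorial k) := by
          apply Nat.mul_le_mul_left
          omega
        have h3 : Xn ≤ Xn * p ^ Nat.factorial k := Nat.le_mul_of_pos_right _ (by omega)
        calc Y * S p k + Xn ≤ Y * (2 * p ^ Nat.factorial k) + Xn * p ^ Nat.factorial k := by omega
          _ = (2*Y + Xn) * p ^ Nat.factorial k := by ring
          _ < C * p ^ Nat.factorial k := by
              have hp1' : 0 < p ^ Nat.factorial k := Nat.pow_pos hp.out.pos
              exact (Nat.mul_lt_mul_right hp1').mpr (by omega)
      have h4 : C < p ^ (k * Nat.factorial k) := by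
        calc C < 2 ^ C := Nat.lt_two_pow_self (n := C)
          _ ≤ 2 ^ k := Nat.pow_le_pow_right (by norm_num) hkC
          _ ≤ 2 ^ (k * Nat.factorial k) := by
              apply Nat.pow_le_pow_right (by norm_num)
              have := Nat.one_le_iff_ne_zero.mpr (Nat.factorial_ne_zero k)
              nlinarith
          _ ≤ p ^ (k * Nat.factorial k) := Nat.pow_le_pow_left (hp2 p) _
      have h5 : Nat.factorial (k+1) = k * Nat.factorial k + Nat.factorial k := by
        rw [Nat.factorial_succ]; ring
      calc Y * S p k + Xn < C * p ^ Nat.factorial k := h1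
        _ < p ^ (k * Nat.factorial k) * p ^ Nat.factorial k := by
            exact (Nat.mul_lt_mul_right (Nat.pow_pos hp.out.pos)).mpr h4
        _ = p ^ Nat.factorial (k+1) := by rw [h5, pow_add]
    have hcast : ((Y * S p k + Xn : ℕ) : ℤ) < ((p ^ Nat.factorial (k+1) : ℕ) : ℤ) := by
      exact_mod_cast hnat
    have htri : |y * (S p k : ℤ) - x| ≤ ((Y * S p k + Xn : ℕ) : ℤ) := by
      calc |y * (S p k : ℤ) - x| ≤ |y * (S p k : ℤ)| + |x| := abs_sub _ _
        _ = |y| * (S p k : ℤ) + |x| := by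
            rw [abs_mul, abs_of_nonneg (by positivity : (0:ℤ) ≤ (S p k : ℤ))]
        _ = ((Y * S p k + Xn : ℕ) : ℤ) := by
            rw [hY, hXn]
            rw [Int.abs_eq_natAbs y, Int.abs_eq_natAbs x]
            push_cast
            ring
    calc |y * (S p k : ℤ) - x| ≤ ((Y * S p k + Xn : ℕ) : ℤ) := htri
      _ < ((p ^ Nat.factorial (k+1) : ℕ) : ℤ) := hcast
      _ = (p:ℤ)^(Nat.factorial (k+1)) := by push_cast; ring
  by_contra hne
  have h0 : y * (S p k : ℤ) - x ≠ 0 := fun h => hne (by omega)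
  have := Int.le_of_dvd (abs_pos.mpr h0) ((dvd_abs _ _).mpr hdvd)
  omega

lemma xi_irrational (r : ℚ) : (r : ℚ_[p]) ≠ xi p := by
  intro h
  set y : ℤ := (r.den : ℤ) with hy
  set x : ℤ := r.num with hx
  have hyne : y ≠ 0 := by
    rw [hy]
    exact_mod_cast r.den_nz
  have hrel : (y:ℚ_[p]) * xi p - (x:ℚ_[p]) = 0 := by
    rw [← h]
    have h1 : (y:ℚ) * r - (x:ℚ) = 0 := by
      rw [hy, hx, sub_eq_zero, mul_comm]
      exact_mod_cast Rat.mul_den_eq_num r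
    calc (y:ℚ_[p]) * (r:ℚ_[p]) - (x:ℚ_[p]) = (((y:ℚ) * r - (x:ℚ) : ℚ) : ℚ_[p]) := by push_cast; ring
      _ = 0 := by rw [h1]; exact Rat.cast_zero
  set k : ℕ := 2*y.natAbs + x.natAbs + 1 with hk
  have hk1 : 1 ≤ k := by omega
  have e1 := approx_eq p x y hrel k hk1 le_rfl
  have e2 := approx_eq p x y hrel (k+1) (by omega) (by omega)
  have e3 : y * (S p (k+1) : ℤ) = y * (S p k : ℤ) := by rw [e1, e2]
  rw [S_succ] at e3
  push_cast at e3
  have e4 : y * (p:ℤ)^(Nat.factorial (k+1)) = 0 := by linarith [e3]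
  have e5 : (p:ℤ)^(Nat.factorial (k+1)) ≠ 0 :=
    pow_ne_zero _ (by exact_mod_cast hp.out.pos.ne')
  exact hyne (by simpa [e5] using mul_eq_zero.mp e4)

end S5

/-- The `p`-adic Liouville number `ξ∞ = Σ_{j≥1} p^(j!)` satisfies `μ̂×(ξ∞) = 3`.
In particular `3` belongs to the spectrum of `μ̂×`. -/
theorem statement5 (p : ℕ) [Fact p.Prime] :
    muHatTimesExp p (∑' j : ℕ, (p : ℚ_[p]) ^ Nat.factorial (j + 1)) = 3 ∧
    (3 : ℝ≥0∞) ∈ {v : ℝ≥0∞ | ∃ ξ : ℚ_[p], PadicIrrational p ξ ∧ muHatTimesExp p ξ = v} := by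
  have hmain : muHatTimesExp p (∑' j : ℕ, (p : ℚ_[p]) ^ Nat.factorial (j + 1)) = 3 := by
    rw [muHatTimesExp]
    apply le_antisymm
    · apply sSup_le
      rintro z ⟨m, hmA, rfl⟩
      rcases le_or_gt m 3 with h3 | h3
      · calc ENNReal.ofReal m ≤ ENNReal.ofReal 3 := ENNReal.ofReal_le_ofReal h3
          _ = 3 := by norm_num
      · exact (S5.upper p m h3 hmA).elim
    · apply le_of_forall_lt_imp_le_of_dense
      intro c hc
      have hcne : c ≠ ⊤ := ne_top_of_lt hc
      have hc3 : c.toReal < 3 := by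
        have h1 := (ENNReal.toReal_lt_toReal hcne (by norm_num)).mpr hc
        simpa using h1
      set m : ℝ := max 2 ((c.toReal + 3)/2) with hm
      have hm2 : 2 ≤ m := le_max_left _ _
      have hm3 : m < 3 := by
        apply max_lt (by norm_num)
        linarith
      have hrm : c.toReal ≤ m := by
        have h2 : c.toReal ≤ (c.toReal + 3)/2 := by linarith
        exact le_trans h2 (le_max_right _ _)
      have hmem := S5.lower p m hm2 hm3
      calc c = ENNReal.ofReal c.toReal := (ENNReal.ofReal_toReal hcne).symm
        _ ≤ ENNReal.ofReal m := ENNReal.ofReal_le_ofReal hrm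
        _ ≤ _ := le_sSup (Set.mem_image_of_mem _ hmem)
  have h2 : ∃ ξ : ℚ_[p], PadicIrrational p ξ ∧ muHatTimesExp p ξ = 3 :=
    ⟨∑' j : ℕ, (p : ℚ_[p]) ^ Nat.factorial (j + 1), S5.xi_irrational p, hmain⟩
  exact ⟨hmain, h2⟩
end

section
/- Let ξ ∈ ℚ_p. There do not exist two linearly independent integer pairs (x₁,y₁) and (x₂,y₂) which, setting X_i = max(|x_i|,|y_i|) for i = 1,2, satisfy |y_i ξ − x_i|_p < (1/2)·X₁^{−1}·X₂^{−1} for i = 1,2. In particular, for any real number X > 1, the system max(|x|,|y|) ≤ X, |yξ − x|_p < (1/2)·X^{−2} does not have two linearly independent integer solutions (x,y). -/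
open Filter MeasureTheory
open scoped ENNReal

lemma aux_norm (p : ℕ) [Fact p.Prime] {n : ℤ} (hn : n ≠ 0) :
    1 ≤ |(n : ℝ)| * ‖(n : ℚ_[p])‖ := by
  have hq : ((n : ℚ) : ℚ_[p]) = (n : ℚ_[p]) := by norm_cast
  have hnq : (n : ℚ) ≠ 0 := by exact_mod_cast hn
  obtain ⟨z, hz⟩ := padicNorm.values_discrete (p := p) hnq
  have hnorm : ‖(n : ℚ_[p])‖ = (p : ℝ) ^ (-z) := by
    rw [← hq, Padic.eq_padicNorm, hz]; push_cast; ring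
  have hp1 : (1 : ℝ) < p := by exact_mod_cast (Fact.out : p.Prime).one_lt
  have hz0 : 0 ≤ z := by
    by_contra h
    push_neg at h
    have h1 : ‖(n : ℚ_[p])‖ ≤ 1 := Padic.norm_int_le_one n
    rw [hnorm] at h1
    have : (1 : ℝ) < (p : ℝ) ^ (-z) := one_lt_zpow₀ hp1 (by omega)
    linarith
  have hdvd : (p ^ z.toNat : ℤ) ∣ n := by
    rw [← Padic.norm_int_le_pow_iff_dvd, hnorm]
    apply le_of_eq
    congr 1
    omega
  have hle : (p : ℤ) ^ z.toNat ≤ |n| := Int.le_of_dvd (abs_pos.mpr hn) ((dvd_abs _ _).mpr hdvd)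
  have hleR : (p : ℝ) ^ z.toNat ≤ |(n : ℝ)| := by
    rw [← Int.cast_abs]; exact_mod_cast hle
  have key : (1 : ℝ) = (p : ℝ) ^ z.toNat * (p : ℝ) ^ (-z) := by
    rw [← zpow_natCast, ← zpow_add₀ (by linarith)]
    norm_num [Int.toNat_of_nonneg hz0]
  rw [hnorm, key]
  gcongr

lemma aux_main (p : ℕ) [Fact p.Prime] (ξ : ℚ_[p]) :
    ¬ ∃ x₁ y₁ x₂ y₂ : ℤ, x₁ * y₂ - x₂ * y₁ ≠ 0 ∧
      ‖(y₁ : ℚ_[p]) * ξ - (x₁ : ℚ_[p])‖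
        < 1 / 2 * (max |(x₁ : ℝ)| |(y₁ : ℝ)|)⁻¹ * (max |(x₂ : ℝ)| |(y₂ : ℝ)|)⁻¹ ∧
      ‖(y₂ : ℚ_[p]) * ξ - (x₂ : ℚ_[p])‖
        < 1 / 2 * (max |(x₁ : ℝ)| |(y₁ : ℝ)|)⁻¹ * (max |(x₂ : ℝ)| |(y₂ : ℝ)|)⁻¹ := by
  rintro ⟨x₁, y₁, x₂, y₂, hD, h1, h2⟩
  set D : ℤ := x₁ * y₂ - x₂ * y₁ with hDdef
  set X₁ : ℝ := max |(x₁ : ℝ)| |(y₁ : ℝ)| with hX₁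
  set X₂ : ℝ := max |(x₂ : ℝ)| |(y₂ : ℝ)| with hX₂
  -- both pairs are nonzero
  have hne₁ : x₁ ≠ 0 ∨ y₁ ≠ 0 := by
    by_contra h; push_neg at h; apply hD; rw [hDdef, h.1, h.2]; ring
  have hne₂ : x₂ ≠ 0 ∨ y₂ ≠ 0 := by
    by_contra h; push_neg at h; apply hD; rw [hDdef, h.1, h.2]; ring
  have hX₁1 : 1 ≤ X₁ := by
    rcases hne₁ with h | h
    · exact le_max_of_le_left (by exact_mod_cast Int.one_le_abs (by simpa using h))
    · exact le_max_of_le_right (by exact_mod_cast Int.one_le_abs (by simpa using h))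
  have hX₂1 : 1 ≤ X₂ := by
    rcases hne₂ with h | h
    · exact le_max_of_le_left (by exact_mod_cast Int.one_le_abs (by simpa using h))
    · exact le_max_of_le_right (by exact_mod_cast Int.one_le_abs (by simpa using h))
  -- p-adic bound on D
  have hDsplit : (D : ℚ_[p]) =
      (y₁ : ℚ_[p]) * ((y₂ : ℚ_[p]) * ξ - (x₂ : ℚ_[p]))
        - (y₂ : ℚ_[p]) * ((y₁ : ℚ_[p]) * ξ - (x₁ : ℚ_[p])) := by
    push_cast [hDdef]; ring
  have hB : (0:ℝ) < 1 / 2 * X₁⁻¹ * X₂⁻¹ := by positivity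
  have hnormD : ‖(D : ℚ_[p])‖ < 1 / 2 * X₁⁻¹ * X₂⁻¹ := by
    rw [hDsplit]
    have hsub : ∀ a b : ℚ_[p], ‖a - b‖ ≤ max ‖a‖ ‖b‖ := fun a b => by
      calc ‖a - b‖ = ‖a + (-b)‖ := by rw [sub_eq_add_neg]
        _ ≤ max ‖a‖ ‖-b‖ := Padic.nonarchimedean _ _
        _ = max ‖a‖ ‖b‖ := by rw [norm_neg]
    refine lt_of_le_of_lt (hsub _ _) ?_
    rw [max_lt_iff]
    constructor
    · calc ‖(y₁ : ℚ_[p]) * ((y₂ : ℚ_[p]) * ξ - (x₂ : ℚ_[p]))‖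
          = ‖(y₁ : ℚ_[p])‖ * ‖(y₂ : ℚ_[p]) * ξ - (x₂ : ℚ_[p])‖ := norm_mul _ _
        _ ≤ 1 * ‖(y₂ : ℚ_[p]) * ξ - (x₂ : ℚ_[p])‖ :=
            mul_le_mul_of_nonneg_right (Padic.norm_int_le_one _) (norm_nonneg _)
        _ < 1 / 2 * X₁⁻¹ * X₂⁻¹ := by rw [one_mul]; exact h2
    · calc ‖(y₂ : ℚ_[p]) * ((y₁ : ℚ_[p]) * ξ - (x₁ : ℚ_[p]))‖
          = ‖(y₂ : ℚ_[p])‖ * ‖(y₁ : ℚ_[p]) * ξ - (x₁ : ℚ_[p])‖ := norm_mul _ _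
        _ ≤ 1 * ‖(y₁ : ℚ_[p]) * ξ - (x₁ : ℚ_[p])‖ :=
            mul_le_mul_of_nonneg_right (Padic.norm_int_le_one _) (norm_nonneg _)
        _ < 1 / 2 * X₁⁻¹ * X₂⁻¹ := by rw [one_mul]; exact h1
  -- real bound on D
  have habsD : |(D : ℝ)| ≤ 2 * X₁ * X₂ := by
    have h1 : |(x₁ : ℝ)| ≤ X₁ := le_max_left _ _
    have h2' : |(y₁ : ℝ)| ≤ X₁ := le_max_right _ _
    have h3 : |(x₂ : ℝ)| ≤ X₂ := le_max_left _ _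
    have h4 : |(y₂ : ℝ)| ≤ X₂ := le_max_right _ _
    have : |(D : ℝ)| ≤ |(x₁ : ℝ)| * |(y₂ : ℝ)| + |(x₂ : ℝ)| * |(y₁ : ℝ)| := by
      push_cast [hDdef]
      calc |(x₁:ℝ) * y₂ - (x₂:ℝ) * y₁| ≤ |(x₁:ℝ) * y₂| + |(x₂:ℝ) * y₁| := abs_sub _ _
        _ = |(x₁:ℝ)| * |(y₂:ℝ)| + |(x₂:ℝ)| * |(y₁:ℝ)| := by rw [abs_mul, abs_mul]
    have hb1 : |(x₁ : ℝ)| * |(y₂ : ℝ)| ≤ X₁ * X₂ :=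
      mul_le_mul h1 h4 (abs_nonneg _) (by linarith)
    have hb2 : |(x₂ : ℝ)| * |(y₁ : ℝ)| ≤ X₂ * X₁ :=
      mul_le_mul h3 h2' (abs_nonneg _) (by linarith)
    nlinarith
  have hkey := aux_norm p (n := D) hD
  have hX₁0 : (0:ℝ) < X₁ := by linarith
  have hX₂0 : (0:ℝ) < X₂ := by linarith
  have : |(D : ℝ)| * ‖(D : ℚ_[p])‖ < (2 * X₁ * X₂) * (1 / 2 * X₁⁻¹ * X₂⁻¹) := by
    apply mul_lt_mul' habsD hnormD (norm_nonneg _)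
    positivity
  have heq : (2 * X₁ * X₂) * (1 / 2 * X₁⁻¹ * X₂⁻¹) = 1 := by
    field_simp
  linarith [hkey, this, heq ▸ this]

/-- There are no two linearly independent integer pairs `(x₁,y₁)`, `(x₂,y₂)` with
`|yᵢξ - xᵢ|_p < (1/2)·X₁⁻¹·X₂⁻¹` for `i = 1, 2`, where `Xᵢ = max(|xᵢ|,|yᵢ|)`.
In particular, for `X > 1` the system `max(|x|,|y|) ≤ X`, `|yξ - x|_p < (1/2)·X⁻²`
has no two linearly independent integer solutions. -/
theorem statement9 (p : ℕ) [Fact p.Prime] (ξ : ℚ_[p]) :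
    (¬ ∃ x₁ y₁ x₂ y₂ : ℤ, x₁ * y₂ - x₂ * y₁ ≠ 0 ∧
      ‖(y₁ : ℚ_[p]) * ξ - (x₁ : ℚ_[p])‖
        < 1 / 2 * (max |(x₁ : ℝ)| |(y₁ : ℝ)|)⁻¹ * (max |(x₂ : ℝ)| |(y₂ : ℝ)|)⁻¹ ∧
      ‖(y₂ : ℚ_[p]) * ξ - (x₂ : ℚ_[p])‖
        < 1 / 2 * (max |(x₁ : ℝ)| |(y₁ : ℝ)|)⁻¹ * (max |(x₂ : ℝ)| |(y₂ : ℝ)|)⁻¹) ∧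
    (∀ X : ℝ, 1 < X → ¬ ∃ x₁ y₁ x₂ y₂ : ℤ, x₁ * y₂ - x₂ * y₁ ≠ 0 ∧
      max |(x₁ : ℝ)| |(y₁ : ℝ)| ≤ X ∧ max |(x₂ : ℝ)| |(y₂ : ℝ)| ≤ X ∧
      ‖(y₁ : ℚ_[p]) * ξ - (x₁ : ℚ_[p])‖ < 1 / 2 * X ^ (-2 : ℤ) ∧
      ‖(y₂ : ℚ_[p]) * ξ - (x₂ : ℚ_[p])‖ < 1 / 2 * X ^ (-2 : ℤ)) := by
  constructor
  · exact aux_main p ξ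
  · intro X hX
    rintro ⟨x₁, y₁, x₂, y₂, hD, hb₁, hb₂, h1, h2⟩
    apply aux_main p ξ
    refine ⟨x₁, y₁, x₂, y₂, hD, ?_, ?_⟩
    · refine lt_of_lt_of_le h1 ?_
      have hne₁ : x₁ ≠ 0 ∨ y₁ ≠ 0 := by
        by_contra h; push_neg at h; apply hD; rw [h.1, h.2]; ring
      have hne₂ : x₂ ≠ 0 ∨ y₂ ≠ 0 := by
        by_contra h; push_neg at h; apply hD; rw [h.1, h.2]; ring
      have hX₁1 : 1 ≤ max |(x₁ : ℝ)| |(y₁ : ℝ)| := by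
        rcases hne₁ with h | h
        · exact le_max_of_le_left (by exact_mod_cast Int.one_le_abs (by simpa using h))
        · exact le_max_of_le_right (by exact_mod_cast Int.one_le_abs (by simpa using h))
      have hX₂1 : 1 ≤ max |(x₂ : ℝ)| |(y₂ : ℝ)| := by
        rcases hne₂ with h | h
        · exact le_max_of_le_left (by exact_mod_cast Int.one_le_abs (by simpa using h))
        · exact le_max_of_le_right (by exact_mod_cast Int.one_le_abs (by simpa using h))
      have hXpos : (0:ℝ) < X := by linarith
      have hpow : X ^ (-2:ℤ) = (X * X)⁻¹ := by
        rw [zpow_neg]; congr 1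
        rw [show ((2:ℤ)) = ((2:ℕ):ℤ) from rfl, zpow_natCast]; ring
      have hmul : max |(x₁ : ℝ)| |(y₁ : ℝ)| * max |(x₂ : ℝ)| |(y₂ : ℝ)| ≤ X * X :=
        mul_le_mul hb₁ hb₂ (by linarith) (by linarith)
      have hinv : (X * X)⁻¹ ≤ (max |(x₁ : ℝ)| |(y₁ : ℝ)| * max |(x₂ : ℝ)| |(y₂ : ℝ)|)⁻¹ := by
        apply inv_anti₀ (by positivity) hmul
      rw [hpow, mul_assoc, ← mul_inv]
      exact mul_le_mul_of_nonneg_left hinv (by norm_num)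
    · refine lt_of_lt_of_le h2 ?_
      have hne₁ : x₁ ≠ 0 ∨ y₁ ≠ 0 := by
        by_contra h; push_neg at h; apply hD; rw [h.1, h.2]; ring
      have hne₂ : x₂ ≠ 0 ∨ y₂ ≠ 0 := by
        by_contra h; push_neg at h; apply hD; rw [h.1, h.2]; ring
      have hX₁1 : 1 ≤ max |(x₁ : ℝ)| |(y₁ : ℝ)| := by
        rcases hne₁ with h | h
        · exact le_max_of_le_left (by exact_mod_cast Int.one_le_abs (by simpa using h))
        · exact le_max_of_le_right (by exact_mod_cast Int.one_le_abs (by simpa using h))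
      have hX₂1 : 1 ≤ max |(x₂ : ℝ)| |(y₂ : ℝ)| := by
        rcases hne₂ with h | h
        · exact le_max_of_le_left (by exact_mod_cast Int.one_le_abs (by simpa using h))
        · exact le_max_of_le_right (by exact_mod_cast Int.one_le_abs (by simpa using h))
      have hXpos : (0:ℝ) < X := by linarith
      have hpow : X ^ (-2:ℤ) = (X * X)⁻¹ := by
        rw [zpow_neg]; congr 1
        rw [show ((2:ℤ)) = ((2:ℕ):ℤ) from rfl, zpow_natCast]; ring
      have hmul : max |(x₁ : ℝ)| |(y₁ : ℝ)| * max |(x₂ : ℝ)| |(y₂ : ℝ)| ≤ X * X :=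
        mul_le_mul hb₁ hb₂ (by linarith) (by linarith)
      have hinv : (X * X)⁻¹ ≤ (max |(x₁ : ℝ)| |(y₁ : ℝ)| * max |(x₂ : ℝ)| |(y₂ : ℝ)|)⁻¹ := by
        apply inv_anti₀ (by positivity) hmul
      rw [hpow, mul_assoc, ← mul_inv]
      exact mul_le_mul_of_nonneg_left hinv (by norm_num)
end
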